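/- arXiv:1505.08132 — 7 statements merged into one kernel-verified Lean document; each statement's English description precedes it below -/
import Mathlib

section
/- The sum of the k-th powers of all 2×2 matrices over Z/2Z equals the zero matrix if k = 1 or k ≡ 2, 3, 4 (mod 6), and equals the identity matrix if k > 1 and k ≡ 0, 1, 5 (mod 6). -/
private def S (k : ℕ) : Matrix (Fin 2) (Fin 2) (ZMod 2) :=
  ∑ M : Matrix (Fin 2) (Fin 2) (ZMod 2), M ^ k

private lemma pow82 : ∀ M : Matrix (Fin 2) (Fin 2) (ZMod 2), M ^ 8 = M ^ 2 := by decide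

private lemma S_period (n : ℕ) : S (n + 8) = S (n + 2) := by
  unfold S
  refine Finset.sum_congr rfl fun M _ => ?_
  rw [pow_add, pow_add, pow82]

private lemma S_red : ∀ k, 2 ≤ k → S k = S (k % 6 + 6) := by
  intro k
  induction k using Nat.strong_induction_on with
  | _ k ih =>
    intro hk
    rcases lt_or_ge k 8 with h | h
    · interval_cases k
      · exact (S_period 0).symm
      · exact (S_period 1).symm
      · exact (S_period 2).symm
      · exact (S_period 3).symm
      · rfl
      · rfl
    · have h1 : k - 8 + 8 = k := by omega
      have h2 : k - 8 + 2 = k - 6 := by omega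
      have := S_period (k - 8)
      rw [h1, h2] at this
      have h3 : (k - 6) % 6 = k % 6 := by omega
      rw [this, ih (k - 6) (by omega) (by omega), h3]

theorem stmt_1 (k : ℕ) (hk : 1 ≤ k) :
    ((k = 1 ∨ k % 6 = 2 ∨ k % 6 = 3 ∨ k % 6 = 4) →
      ∑ M : Matrix (Fin 2) (Fin 2) (ZMod 2), M ^ k = 0) ∧
    ((1 < k ∧ (k % 6 = 0 ∨ k % 6 = 1 ∨ k % 6 = 5)) →
      ∑ M : Matrix (Fin 2) (Fin 2) (ZMod 2), M ^ k = 1) := by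
  constructor
  · rintro (rfl | h | h | h)
    · show S 1 = 0; decide
    · show S k = 0
      rw [S_red k (by omega), h]; decide
    · show S k = 0
      rw [S_red k (by omega), h]; decide
    · show S k = 0
      rw [S_red k (by omega), h]; set_option maxRecDepth 100000 in decide
  · rintro ⟨h1, h | h | h⟩ <;>
      (show S k = 1; rw [S_red k (by omega), h]) <;> decide
end

section
/- Let p be a prime, d ≥ 2, and s ≥ 1. Then Σ_{M ∈ M_d(Z/p^{s+1}Z)} M^k = p^{d^2} · π(Σ_{M ∈ M_d(Z/p^sZ)} M^k) in M_d(Z/p^{s+1}Z), interpreted via the congruence: the sum over M_d(Z/p^{s+1}Z) of M^k is congruent modulo p^{s+1} to p^{d^2} times any integer-matrix lift of the sum over M_d(Z/p^sZ) of M^k. -/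
open Finset

/-- Noncommutative binomial expansion when `e` lies in a "square-zero" set. -/
private lemma aux_pow_add_sq_zero {R : Type*} [Ring R] (a e : R)
    (h : ∀ x : R, e * x * e = 0) :
    ∀ k : ℕ, (a + e) ^ k = a ^ k + ∑ i ∈ Finset.range k, a ^ i * e * a ^ (k - 1 - i)
  | 0 => by simp
  | (k + 1) => by
    have ih := aux_pow_add_sq_zero a e h k
    have hSe : (∑ i ∈ Finset.range k, a ^ i * e * a ^ (k - 1 - i)) * e = 0 := by
      rw [Finset.sum_mul]
      refine Finset.sum_eq_zero fun i _ => ?_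
      have h1 : a ^ i * e * a ^ (k - 1 - i) * e = a ^ i * (e * a ^ (k - 1 - i) * e) := by
        noncomm_ring
      rw [h1, h, mul_zero]
    have hSa : (∑ i ∈ Finset.range k, a ^ i * e * a ^ (k - 1 - i)) * a
        = ∑ i ∈ Finset.range k, a ^ i * e * a ^ (k - i) := by
      rw [Finset.sum_mul]
      refine Finset.sum_congr rfl fun i hi => ?_
      rw [Finset.mem_range] at hi
      have h2 : k - i = (k - 1 - i) + 1 := by omega
      rw [h2, pow_succ]
      noncomm_ring
    calc (a + e) ^ (k + 1)
        = (a ^ k + ∑ i ∈ Finset.range k, a ^ i * e * a ^ (k - 1 - i)) * (a + e) := by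
          rw [pow_succ, ih]
      _ = a ^ (k + 1) + ((∑ i ∈ Finset.range k, a ^ i * e * a ^ (k - 1 - i)) * a + a ^ k * e)
            + (∑ i ∈ Finset.range k, a ^ i * e * a ^ (k - 1 - i)) * e := by
          rw [pow_succ]; noncomm_ring
      _ = a ^ (k + 1) + ∑ i ∈ Finset.range (k + 1), a ^ i * e * a ^ (k - i) := by
          rw [hSe, add_zero, hSa, Finset.sum_range_succ]
          simp
      _ = a ^ (k + 1) + ∑ i ∈ Finset.range (k + 1), a ^ i * e * a ^ (k + 1 - 1 - i) := by
          simp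

/-- Splitting a matrix over `Fin (m*n)` into its `mod m` and `div m` parts. -/
private def auxFinEquiv (m n : ℕ) (hm : 0 < m) : Fin m × Fin n ≃ Fin (m * n) where
  toFun x := ⟨(x.1 : ℕ) + m * (x.2 : ℕ), by
    have h1 : (x.1 : ℕ) < m := x.1.isLt
    have h2 : (x.2 : ℕ) < n := x.2.isLt
    calc (x.1 : ℕ) + m * (x.2 : ℕ) < m + m * (x.2 : ℕ) := by omega
      _ = m * ((x.2 : ℕ) + 1) := by ring
      _ ≤ m * n := Nat.mul_le_mul_left m (by omega)⟩
  invFun y := (⟨(y : ℕ) % m, Nat.mod_lt _ hm⟩,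
    ⟨(y : ℕ) / m, by
      have := y.isLt
      exact Nat.div_lt_of_lt_mul (by omega)⟩)
  left_inv := by
    rintro ⟨a, b⟩
    have h1 : (a : ℕ) < m := a.isLt
    ext
    · simp [Nat.add_mul_mod_self_left, Nat.mod_eq_of_lt h1]
    · simp [Nat.add_mul_div_left _ _ hm, Nat.div_eq_of_lt h1]
  right_inv := by
    intro y
    ext
    simp [Nat.mod_add_div]

private def auxMatEquiv (d m n : ℕ) (hm : 0 < m) :
    (Matrix (Fin d) (Fin d) (Fin m) × Matrix (Fin d) (Fin d) (Fin n)) ≃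
      Matrix (Fin d) (Fin d) (Fin (m * n)) where
  toFun AB := fun i j => auxFinEquiv m n hm (AB.1 i j, AB.2 i j)
  invFun M := (fun i j => ((auxFinEquiv m n hm).symm (M i j)).1,
    fun i j => ((auxFinEquiv m n hm).symm (M i j)).2)
  left_inv := by
    rintro ⟨A, B⟩
    simp
  right_inv := by
    intro M
    funext i j
    simp

/-- Sum over all matrices of a function of one fixed entry. -/
private lemma aux_sum_entry {d : ℕ} {α : Type*} [Fintype α] {M : Type*} [AddCommMonoid M]
    (f : α → M) (i j : Fin d) :
    ∑ B : Matrix (Fin d) (Fin d) α, f (B i j) =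
      Fintype.card ({x : Fin d × Fin d // x ≠ (i, j)} → α) • ∑ a : α, f a := by
  classical
  let E : Matrix (Fin d) (Fin d) α ≃ (α × ({x : Fin d × Fin d // x ≠ (i, j)} → α)) :=
    ((Equiv.curry (Fin d) (Fin d) α).symm).trans (Equiv.funSplitAt (i, j) α)
  have h1 : ∀ B : Matrix (Fin d) (Fin d) α, f (B i j) = f ((E B).1) := by
    intro B; rfl
  rw [Fintype.sum_congr _ _ h1, Fintype.sum_equiv E _ (fun x => f x.1) (fun B => rfl),
    Fintype.sum_prod_type]
  simp [Finset.sum_const, Finset.smul_sum, smul_comm, Finset.card_univ]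

theorem stmt_4 (p d s k : ℕ) (hp : p.Prime) (hd : 2 ≤ d) (hs : 1 ≤ s) (hk : 1 ≤ k)
    (i j : Fin d) :
    (∑ M : Matrix (Fin d) (Fin d) (Fin (p ^ (s + 1))),
        (M.map fun x => ((x : ℕ) : ℤ)) ^ k) i j ≡
    (p : ℤ) ^ (d ^ 2) *
      (∑ M : Matrix (Fin d) (Fin d) (Fin (p ^ s)),
        (M.map fun x => ((x : ℕ) : ℤ)) ^ k) i j [ZMOD (p ^ (s + 1))] := by
  classical
  set N := p ^ (s + 1) with hN
  have hp0 : 0 < p := hp.pos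
  have hps : 0 < p ^ s := Nat.pow_pos hp0
  rw [show ((p : ℤ) ^ (s + 1)) = ((N : ℕ) : ℤ) by rw [hN]; push_cast; ring]
  rw [← ZMod.intCast_eq_intCast_iff]
  -- reduce integer matrix entries to ZMod N matrix entries
  have castpow : ∀ {m : ℕ} (M : Matrix (Fin d) (Fin d) (Fin m)),
      ((((M.map fun x => ((x : ℕ) : ℤ)) ^ k) i j : ℤ) : ZMod N)
        = (((M.map fun x => ((x : ℕ) : ZMod N))) ^ k) i j := by
    intro m M
    have h := congrArg (fun X : Matrix (Fin d) (Fin d) (ZMod N) => X i j)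
      (map_pow (Int.castRingHom (ZMod N)).mapMatrix (M.map fun x => ((x : ℕ) : ℤ)) k)
    simp only [RingHom.mapMatrix_apply] at h
    rw [Matrix.map_map] at h
    have h2 : (M.map ((Int.castRingHom (ZMod N) : ℤ → ZMod N) ∘ fun x : Fin m => ((x : ℕ) : ℤ)))
        = M.map (fun x : Fin m => ((x : ℕ) : ZMod N)) := by
      funext a b; simp [Matrix.map_apply]
    rw [h2] at h
    simpa [Matrix.map_apply] using h
  have hsum : ∀ {m : ℕ},
      (((∑ M : Matrix (Fin d) (Fin d) (Fin m),
          (M.map fun x => ((x : ℕ) : ℤ)) ^ k) i j : ℤ) : ZMod N)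
        = ∑ M : Matrix (Fin d) (Fin d) (Fin m),
            (((M.map fun x => ((x : ℕ) : ZMod N))) ^ k) i j := by
    intro m
    rw [Matrix.sum_apply]
    push_cast
    exact Finset.sum_congr rfl fun M _ => castpow M
  rw [Int.cast_mul, hsum, hsum]
  push_cast
  -- now a statement purely in ZMod N
  -- reindex over pairs (A, B)
  have hNe : p ^ s * p = N := by rw [hN, pow_succ]
  let E0 := auxMatEquiv d (p ^ s) p hps
  let E : (Matrix (Fin d) (Fin d) (Fin (p ^ s)) × Matrix (Fin d) (Fin d) (Fin p)) ≃
      Matrix (Fin d) (Fin d) (Fin N) :=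
    E0.trans (Equiv.arrowCongr (Equiv.refl _) (Equiv.arrowCongr (Equiv.refl _) (finCongr hNe)))
  have hsplit : ∑ M : Matrix (Fin d) (Fin d) (Fin N),
      ((M.map fun x => ((x : ℕ) : ZMod N)) ^ k) i j
      = ∑ AB : Matrix (Fin d) (Fin d) (Fin (p ^ s)) × Matrix (Fin d) (Fin d) (Fin p),
          (((E AB).map fun x => ((x : ℕ) : ZMod N)) ^ k) i j :=
    (Fintype.sum_equiv E _ _ fun AB => rfl).symm
  rw [hsplit, Fintype.sum_prod_type]
  -- decompose the map of E (A, B)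
  have hmap : ∀ (A : Matrix (Fin d) (Fin d) (Fin (p ^ s))) (B : Matrix (Fin d) (Fin d) (Fin p)),
      ((E (A, B)).map fun x => ((x : ℕ) : ZMod N))
        = (A.map fun x => ((x : ℕ) : ZMod N))
          + ((p : ZMod N) ^ s) • (B.map fun x => ((x : ℕ) : ZMod N)) := by
    intro A B
    funext a b
    show (((E (A, B)) a b : ℕ) : ZMod N) = _
    have : ((E (A, B)) a b : ℕ) = (A a b : ℕ) + p ^ s * (B a b : ℕ) := rfl
    rw [this]
    push_cast
    simp [Matrix.add_apply, Matrix.smul_apply, Matrix.map_apply, smul_eq_mul]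
  -- square-zero property
  have hsqz : ∀ B : Matrix (Fin d) (Fin d) (Fin p),
      ∀ x : Matrix (Fin d) (Fin d) (ZMod N),
        (((p : ZMod N) ^ s) • (B.map fun y => ((y : ℕ) : ZMod N))) * x *
          (((p : ZMod N) ^ s) • (B.map fun y => ((y : ℕ) : ZMod N))) = 0 := by
    intro B x
    have hzero : (p : ZMod N) ^ s * (p : ZMod N) ^ s = 0 := by
      have : ((p ^ (s + s) : ℕ) : ZMod N) = 0 := by
        rw [ZMod.natCast_eq_zero_iff]
        exact pow_dvd_pow p (by omega)
      push_cast at this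
      rw [← pow_add]
      exact this
    rw [smul_mul_assoc, smul_mul_assoc, mul_smul_comm, smul_smul, hzero, zero_smul]
  -- main expansion and inner sum over B
  have hinner : ∀ A : Matrix (Fin d) (Fin d) (Fin (p ^ s)),
      ∑ B : Matrix (Fin d) (Fin d) (Fin p),
        (((E (A, B)).map fun x => ((x : ℕ) : ZMod N)) ^ k) i j
      = (p ^ (d ^ 2) : ℕ) • (((A.map fun x => ((x : ℕ) : ZMod N)) ^ k) i j) := by
    intro A
    set Am := A.map fun x => ((x : ℕ) : ZMod N) with hAm
    have hexp : ∀ B : Matrix (Fin d) (Fin d) (Fin p),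
        (((E (A, B)).map fun x => ((x : ℕ) : ZMod N)) ^ k)
          = Am ^ k + ∑ t ∈ Finset.range k,
              Am ^ t * (((p : ZMod N) ^ s) • (B.map fun x => ((x : ℕ) : ZMod N)))
                * Am ^ (k - 1 - t) := by
      intro B
      rw [hmap A B]
      exact aux_pow_add_sq_zero Am _ (hsqz B) k
    have hlin : (((p : ZMod N) ^ s) •
        ∑ B : Matrix (Fin d) (Fin d) (Fin p), (B.map fun x => ((x : ℕ) : ZMod N)))
          = 0 := by
      funext a b
      show (p : ZMod N) ^ s * ((∑ B : Matrix (Fin d) (Fin d) (Fin p),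
        (B.map fun x => ((x : ℕ) : ZMod N))) a b) = 0
      rw [Matrix.sum_apply]
      have : ∑ B : Matrix (Fin d) (Fin d) (Fin p),
          (B.map fun x => ((x : ℕ) : ZMod N)) a b
          = ∑ B : Matrix (Fin d) (Fin d) (Fin p), (((B a b : ℕ) : ZMod N)) := rfl
      rw [this, aux_sum_entry (fun x : Fin p => ((x : ℕ) : ZMod N)) a b]
      set m := Fintype.card ({x : Fin d × Fin d // x ≠ (a, b)} → Fin p) with hm
      have hpm : p ∣ m := by
        rw [hm, Fintype.card_fun, Fintype.card_fin]
        refine dvd_pow_self p ?_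
        have hlt : 1 < Fintype.card (Fin d × Fin d) := by
          simp [Fintype.card_prod, Fintype.card_fin]
          nlinarith
        obtain ⟨y, hy⟩ := Fintype.exists_ne_of_one_lt_card hlt (a, b)
        have : 0 < Fintype.card {x : Fin d × Fin d // x ≠ (a, b)} :=
          Fintype.card_pos_iff.mpr ⟨⟨y, hy⟩⟩
        omega
      obtain ⟨m', hm'⟩ := hpm
      have hcast : (∑ x : Fin p, ((x : ℕ) : ZMod N)) = ((∑ x : Fin p, (x : ℕ) : ℕ) : ZMod N) := by
        push_cast
        rfl
      rw [hcast, nsmul_eq_mul]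
      have : (p : ZMod N) ^ s * ((m : ZMod N) * ((∑ x : Fin p, (x : ℕ) : ℕ) : ZMod N))
          = ((p ^ s * (m * ∑ x : Fin p, (x : ℕ)) : ℕ) : ZMod N) := by push_cast; ring
      rw [this, ZMod.natCast_eq_zero_iff]
      rw [hm', hN]
      calc p ^ (s + 1) = p ^ s * p := by rw [pow_succ]
        _ ∣ p ^ s * (p * m' * ∑ x : Fin p, (x : ℕ)) :=
            mul_dvd_mul_left _ ⟨m' * ∑ x : Fin p, (x : ℕ), by ring⟩
        _ = p ^ s * (p * m' * ∑ x : Fin p, (x : ℕ)) := rfl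
    calc ∑ B : Matrix (Fin d) (Fin d) (Fin p),
          (((E (A, B)).map fun x => ((x : ℕ) : ZMod N)) ^ k) i j
        = ∑ B : Matrix (Fin d) (Fin d) (Fin p),
            ((Am ^ k) i j + (∑ t ∈ Finset.range k,
              Am ^ t * (((p : ZMod N) ^ s) • (B.map fun x => ((x : ℕ) : ZMod N)))
                * Am ^ (k - 1 - t)) i j) := by
          refine Finset.sum_congr rfl fun B _ => ?_
          rw [hexp B, Matrix.add_apply]
      _ = (Fintype.card (Matrix (Fin d) (Fin d) (Fin p))) • ((Am ^ k) i j)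
            + ∑ B : Matrix (Fin d) (Fin d) (Fin p), (∑ t ∈ Finset.range k,
              Am ^ t * (((p : ZMod N) ^ s) • (B.map fun x => ((x : ℕ) : ZMod N)))
                * Am ^ (k - 1 - t)) i j := by
          rw [Finset.sum_add_distrib, Finset.sum_const, Finset.card_univ]
      _ = (p ^ (d ^ 2) : ℕ) • ((Am ^ k) i j) := by
          have hcard : Fintype.card (Matrix (Fin d) (Fin d) (Fin p)) = p ^ (d ^ 2) := by
            show Fintype.card (Fin d → Fin d → Fin p) = p ^ (d ^ 2)
            rw [Fintype.card_fun, Fintype.card_fun, Fintype.card_fin, Fintype.card_fin,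
              ← pow_mul, sq]
          rw [hcard]
          have hz : ∑ B : Matrix (Fin d) (Fin d) (Fin p), (∑ t ∈ Finset.range k,
              Am ^ t * (((p : ZMod N) ^ s) • (B.map fun x => ((x : ℕ) : ZMod N)))
                * Am ^ (k - 1 - t)) i j = 0 := by
            have : ∑ B : Matrix (Fin d) (Fin d) (Fin p), ∑ t ∈ Finset.range k,
                Am ^ t * (((p : ZMod N) ^ s) • (B.map fun x => ((x : ℕ) : ZMod N)))
                  * Am ^ (k - 1 - t)
                = (0 : Matrix (Fin d) (Fin d) (ZMod N)) := by
              rw [Finset.sum_comm]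
              refine Finset.sum_eq_zero fun t _ => ?_
              have : ∑ B : Matrix (Fin d) (Fin d) (Fin p),
                  Am ^ t * (((p : ZMod N) ^ s) • (B.map fun x => ((x : ℕ) : ZMod N)))
                    * Am ^ (k - 1 - t)
                  = Am ^ t * (((p : ZMod N) ^ s) •
                      ∑ B : Matrix (Fin d) (Fin d) (Fin p),
                        (B.map fun x => ((x : ℕ) : ZMod N))) * Am ^ (k - 1 - t) := by
                rw [Finset.smul_sum, Finset.mul_sum, Finset.sum_mul]
              rw [this, hlin, mul_zero, zero_mul]
            calc ∑ B : Matrix (Fin d) (Fin d) (Fin p), (∑ t ∈ Finset.range k,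
                Am ^ t * (((p : ZMod N) ^ s) • (B.map fun x => ((x : ℕ) : ZMod N)))
                  * Am ^ (k - 1 - t)) i j
                = (∑ B : Matrix (Fin d) (Fin d) (Fin p), ∑ t ∈ Finset.range k,
                  Am ^ t * (((p : ZMod N) ^ s) • (B.map fun x => ((x : ℕ) : ZMod N)))
                    * Am ^ (k - 1 - t)) i j := by rw [Matrix.sum_apply]
              _ = (0 : Matrix (Fin d) (Fin d) (ZMod N)) i j := by rw [this]
              _ = 0 := rfl
          rw [hz, add_zero]
  -- put everything together
  rw [Finset.sum_congr rfl fun A _ => hinner A]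
  rw [← Finset.smul_sum, nsmul_eq_mul]
  push_cast
  ring
end

section
/- For any prime p, integers d ≥ 2, s ≥ 1, and k ≥ 1, the sum of the k-th powers of all d×d matrices over Z/p^sZ is the zero matrix, unless d = p = 2 and s = 1. -/
namespace Stmt5Aux

open Finset Function Matrix

/-! ### Orbit-counting machinery: sums of invariant functions under a map of prime order -/

lemma orbit_sum_aux {α β : Type*} [DecidableEq α] [AddCommMonoid β]
    (q : ℕ) (hq : q.Prime) (σ : α → α) (hσ : ∀ x, σ^[q] x = x)
    (f : α → β) (hβ : ∀ x : β, q • x = 0) :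
    ∀ (n : ℕ) (s : Finset α), s.card ≤ n → (∀ x ∈ s, σ x ∈ s) → (∀ x ∈ s, f (σ x) = f x) →
      ∑ x ∈ s, f x = ∑ x ∈ s.filter (fun x => σ x = x), f x := by
  have hqpos : 0 < q := hq.pos
  have hinj : Function.Injective σ := by
    intro x y hxy
    have h1 : σ^[q - 1] (σ x) = σ^[q - 1] (σ y) := by rw [hxy]
    rw [← Function.iterate_succ_apply, ← Function.iterate_succ_apply] at h1
    simp only [Nat.succ_eq_add_one] at h1
    rw [show q - 1 + 1 = q by omega] at h1
    rwa [hσ, hσ] at h1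
  intro n
  induction n with
  | zero =>
    intro s hcard _ _
    have hs : s = ∅ := Finset.card_eq_zero.mp (Nat.le_zero.mp hcard)
    subst hs; simp
  | succ n ih =>
    intro s hcard hclosed hf
    by_cases hfix : ∀ x ∈ s, σ x = x
    · rw [Finset.filter_true_of_mem hfix]
    · push_neg at hfix
      obtain ⟨x₀, hx₀s, hx₀⟩ := hfix
      have hmem : ∀ t, σ^[t] x₀ ∈ s := by
        intro t
        induction t with
        | zero => simpa using hx₀s
        | succ m ihm => rw [Function.iterate_succ_apply']; exact hclosed _ ihm
      have hminp : Function.minimalPeriod σ x₀ = q := by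
        have hper : Function.IsPeriodicPt σ q x₀ := hσ x₀
        rcases (hq.eq_one_or_self_of_dvd _ hper.minimalPeriod_dvd) with h1 | h1
        · exact absurd (Function.minimalPeriod_eq_one_iff_isFixedPt.mp h1) hx₀
        · exact h1
      have hdvd : ∀ t, σ^[t] x₀ = x₀ → q ∣ t := by
        intro t ht
        have : Function.IsPeriodicPt σ t x₀ := ht
        exact hminp ▸ this.minimalPeriod_dvd
      have hdisthalf : ∀ t1 t2 : ℕ, t1 ≤ t2 → t2 < q → σ^[t1] x₀ = σ^[t2] x₀ → t1 = t2 := by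
        intro t1 t2 hle hlt heq
        have h3 : σ^[t1] (σ^[t2 - t1] x₀) = σ^[t1] x₀ := by
          rw [← Function.iterate_add_apply, show t1 + (t2 - t1) = t2 by omega]
          exact heq.symm
        have h4 := (hinj.iterate t1) h3
        have h5 := hdvd _ h4
        have h6 : t2 - t1 = 0 := Nat.eq_zero_of_dvd_of_lt h5 (by omega)
        omega
      have hdist : ∀ t1 ∈ Finset.range q, ∀ t2 ∈ Finset.range q,
          σ^[t1] x₀ = σ^[t2] x₀ → t1 = t2 := by
        intro t1 h1 t2 h2 heq
        simp only [Finset.mem_range] at h1 h2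
        rcases le_total t1 t2 with h | h
        · exact hdisthalf t1 t2 h h2 heq
        · exact (hdisthalf t2 t1 h h1 heq.symm).symm
      set O : Finset α := (Finset.range q).image (fun t => σ^[t] x₀) with hO
      have hOsub : O ⊆ s := by
        intro y hy
        rw [hO, Finset.mem_image] at hy
        obtain ⟨t, _, rfl⟩ := hy
        exact hmem t
      have hx₀O : x₀ ∈ O := by
        rw [hO, Finset.mem_image]
        exact ⟨0, Finset.mem_range.mpr hq.pos, rfl⟩
      have hOsum : ∑ x ∈ O, f x = 0 := by
        rw [hO, Finset.sum_image hdist]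
        have hconst : ∀ t, f (σ^[t] x₀) = f x₀ := by
          intro t
          induction t with
          | zero => rfl
          | succ m ihm =>
            rw [Function.iterate_succ_apply', hf _ (hmem m)]
            exact ihm
        rw [Finset.sum_congr rfl (fun t _ => hconst t), Finset.sum_const, Finset.card_range]
        exact hβ _
      have hO1 : 1 ≤ O.card := Finset.card_pos.mpr ⟨x₀, hx₀O⟩
      have hmemO : ∀ t, σ^[t] x₀ ∈ O := by
        intro t
        rw [hO, Finset.mem_image]
        refine ⟨t % q, Finset.mem_range.mpr (Nat.mod_lt _ hq.pos), ?_⟩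
        conv_rhs => rw [show t = q * (t / q) + t % q from (Nat.div_add_mod t q).symm]
        rw [Nat.add_comm, Function.iterate_add_apply]
        congr 1
        induction (t / q) with
        | zero => rfl
        | succ m ihm =>
          rw [show q * (m + 1) = q * m + q by ring, Function.iterate_add_apply, hσ]
          exact ihm
      have hsub2 : ∀ x ∈ s \ O, σ x ∈ s \ O := by
        intro x hx
        rw [Finset.mem_sdiff] at hx ⊢
        refine ⟨hclosed _ hx.1, fun hmem2 => hx.2 ?_⟩
        rw [hO, Finset.mem_image] at hmem2
        obtain ⟨t, ht, heq⟩ := hmem2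
        have hxeq : σ^[q - 1] (σ x) = x := by
          rw [← Function.iterate_succ_apply]
          simp only [Nat.succ_eq_add_one]
          rw [show q - 1 + 1 = q by omega, hσ]
        have : x = σ^[(q - 1) + t] x₀ := by
          rw [Function.iterate_add_apply, heq, hxeq]
        rw [this]; exact hmemO _
      have hfsub2 : ∀ x ∈ s \ O, f (σ x) = f x := fun x hx => hf x (Finset.mem_sdiff.mp hx).1
      have hcard2 : (s \ O).card ≤ n := by
        rw [Finset.card_sdiff_of_subset hOsub]
        omega
      have hrec := ih (s \ O) hcard2 hsub2 hfsub2
      have hfilter : s.filter (fun x => σ x = x) = (s \ O).filter (fun x => σ x = x) := by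
        ext y
        simp only [Finset.mem_filter, Finset.mem_sdiff]
        constructor
        · rintro ⟨hys, hyfix⟩
          refine ⟨⟨hys, fun hyO => ?_⟩, hyfix⟩
          rw [hO, Finset.mem_image] at hyO
          obtain ⟨t, ht, heq⟩ := hyO
          rw [Finset.mem_range] at ht
          have h8 : σ^[q - t] y = y := Function.IsFixedPt.iterate hyfix (q - t)
          have h9 : σ^[q - t] y = x₀ := by
            rw [← heq, ← Function.iterate_add_apply, show q - t + t = q by omega, hσ]
          have h10 : y = x₀ := by rw [← h8, h9]
          exact hx₀ (h10 ▸ hyfix)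
        · rintro ⟨⟨hys, _⟩, hyfix⟩
          exact ⟨hys, hyfix⟩
      calc ∑ x ∈ s, f x = ∑ x ∈ s \ O, f x + ∑ x ∈ O, f x := (Finset.sum_sdiff hOsub).symm
        _ = ∑ x ∈ s \ O, f x := by rw [hOsum, add_zero]
        _ = ∑ x ∈ (s \ O).filter (fun x => σ x = x), f x := hrec
        _ = ∑ x ∈ s.filter (fun x => σ x = x), f x := by rw [hfilter]



/-! ### Part I : the case of a prime modulus -/

set_option linter.unusedSectionVars false

section PartOne

variable {q : ℕ} [Fact q.Prime] [NeZero q] {d : ℕ}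

/-- `E a b` : the elementary matrix with a single 1 at position (a,b). -/
private abbrev Eb (a b : Fin d) : Matrix (Fin d) (Fin d) (ZMod q) :=
  Matrix.single a b 1

lemma Eb_mul_Eb {a b : Fin d} (hab : a ≠ b) : (Eb (q := q) a b) * Eb a b = 0 :=
  Matrix.single_mul_single_of_ne (h := hab.symm) ..

lemma Eb_apply_ne {a b i j : Fin d} (h : ¬(a = i ∧ b = j)) : (Eb (q := q) a b) i j = 0 :=
  Matrix.single_apply_of_ne _ _ _ _ _ h

lemma colentry {a b : Fin d} {X : Matrix (Fin d) (Fin d) (ZMod q)}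
    (hX : X * Eb a b = Eb a b * X) (i : Fin d) :
    X i a = if i = a then X b b else 0 := by
  have h : (X * Eb a b : Matrix (Fin d) (Fin d) (ZMod q)) i b
      = (Eb a b * X : Matrix (Fin d) (Fin d) (ZMod q)) i b := by rw [hX]
  by_cases hia : i = a
  · subst hia
    simp only [Matrix.mul_single_apply_same, mul_one,
      Matrix.single_mul_apply_same, one_mul] at h
    simp [h]
  · simp only [Matrix.mul_single_apply_same, mul_one,
      Matrix.single_mul_apply_of_ne _ _ _ _ _ hia] at h
    simp [h, hia]

lemma mul_Eb_smul {a b : Fin d} {X : Matrix (Fin d) (Fin d) (ZMod q)}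
    (hX : X * Eb a b = Eb a b * X) :
    X * Eb a b = X b b • Eb a b := by
  ext i j
  by_cases hjb : j = b
  · subst hjb
    rw [Matrix.mul_single_apply_same, mul_one, colentry hX i, Matrix.smul_apply]
    by_cases hia : i = a <;> simp [hia, Ne.symm, smul_eq_mul]
  · rw [Matrix.mul_single_apply_of_ne _ _ _ _ _ hjb, Matrix.smul_apply,
      Eb_apply_ne (fun h => hjb h.2.symm), smul_zero]

lemma pow_mul_Eb {a b : Fin d} {X : Matrix (Fin d) (Fin d) (ZMod q)}
    (hX : X * Eb a b = Eb a b * X) :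
    ∀ n : ℕ, X ^ n * Eb a b = (X b b) ^ n • Eb a b
  | 0 => by simp
  | (n + 1) => by
    rw [pow_succ, mul_assoc, mul_Eb_smul hX, mul_smul_comm, pow_mul_Eb hX n, smul_smul,
      ← pow_succ']

lemma pow_entry_col {a b : Fin d} {X : Matrix (Fin d) (Fin d) (ZMod q)}
    (hX : X * Eb a b = Eb a b * X) (n : ℕ) {i : Fin d} (hia : i ≠ a) :
    (X ^ n) i a = 0 := by
  have h : (X ^ n * Eb a b : Matrix (Fin d) (Fin d) (ZMod q)) i b
      = ((X b b) ^ n • Eb a b : Matrix (Fin d) (Fin d) (ZMod q)) i b := by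
    rw [pow_mul_Eb hX n]
  rw [Matrix.mul_single_apply_same, mul_one, Matrix.smul_apply,
    Eb_apply_ne (fun hh => hia hh.1.symm), smul_zero] at h
  exact h

private def rowMat (a : Fin d) (v : Fin d → ZMod q) : Matrix (Fin d) (Fin d) (ZMod q) :=
  Matrix.of fun i j => if i = a then v j else 0

lemma rowMat_apply (a : Fin d) (v : Fin d → ZMod q) (i j : Fin d) :
    rowMat a v i j = if i = a then v j else 0 := rfl

lemma rowMat_add (a : Fin d) (v w : Fin d → ZMod q) :
    rowMat a v + rowMat a w = rowMat a (fun j => v j + w j) := by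
  ext i j; by_cases h : i = a <;> simp [rowMat_apply, h]

lemma rowMat_zero (a : Fin d) : rowMat (q := q) a (fun _ => 0) = 0 := by
  ext i j; by_cases h : i = a <;> simp [rowMat_apply, h]

lemma rowMat_mul (a : Fin d) (v : Fin d → ZMod q) (Y : Matrix (Fin d) (Fin d) (ZMod q)) :
    rowMat a v * Y = rowMat a (fun j => ∑ c, v c * Y c j) := by
  ext i j
  rw [Matrix.mul_apply, rowMat_apply]
  by_cases h : i = a
  · simp [rowMat_apply, h]
  · simp [rowMat_apply, h]

lemma smul_rowMat (a : Fin d) (c : ZMod q) (v : Fin d → ZMod q) :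
    c • rowMat a v = rowMat a (fun j => c * v j) := by
  ext i j; by_cases h : i = a <;> simp [rowMat_apply, h]

lemma Eb_eq_rowMat (a b : Fin d) :
    (Eb (q := q) a b) = rowMat a (fun j => if j = b then 1 else 0) := by
  ext i j
  rw [rowMat_apply]
  by_cases h1 : i = a
  · subst h1
    by_cases h2 : j = b
    · subst h2; simp
    · rw [if_pos rfl, if_neg h2, Eb_apply_ne (fun h => h2 h.2.symm)]
  · rw [if_neg h1, Eb_apply_ne (fun h => h1 h.1.symm)]

lemma pert {a b : Fin d} (hab : a ≠ b) {X : Matrix (Fin d) (Fin d) (ZMod q)}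
    (hX : X * Eb a b = Eb a b * X) :
    ∀ n : ℕ, ∃ v : Fin d → ZMod q, v a = 0 ∧ (X + Eb a b) ^ n = X ^ n + rowMat a v
  | 0 => ⟨fun _ => 0, rfl, by simp [rowMat_zero]⟩
  | (n + 1) => by
    obtain ⟨v, hva, hv⟩ := pert hab hX n
    refine ⟨fun j => (X b b) ^ n * (if j = b then 1 else 0) + ((∑ c, v c * X c j)
      + (∑ c, v c * Eb a b c j)), ?_, ?_⟩
    · show (X b b) ^ n * (if a = b then 1 else 0) + ((∑ c, v c * X c a)
        + (∑ c, v c * Eb a b c a)) = 0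
      have h1 : ((if a = b then (1 : ZMod q) else 0)) = 0 := by simp [hab]
      have h2 : (∑ c, v c * X c a) = 0 := by
        have h3 : ∀ c, v c * X c a = if c = a then v c * X b b else 0 := by
          intro c
          rw [colentry hX c]
          by_cases h : c = a <;> simp [h]
        rw [Finset.sum_congr rfl (fun c _ => h3 c), Finset.sum_ite_eq' Finset.univ a]
        simp [hva]
      have h4 : (∑ c, v c * Eb a b c a) = 0 := by
        apply Finset.sum_eq_zero
        intro c _
        have h5 : (Eb (q := q) a b) c a = 0 := Eb_apply_ne (fun h => hab h.2.symm)
        rw [h5, mul_zero]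
      rw [h1, h2, h4, mul_zero, zero_add, add_zero]
    · rw [pow_succ, hv, add_mul, mul_add, mul_add, pow_mul_Eb hX n, Eb_eq_rowMat, smul_rowMat,
        rowMat_mul, rowMat_mul, ← Eb_eq_rowMat, ← pow_succ]
      have hcomb : rowMat a (fun j => (X b b) ^ n * (if j = b then 1 else 0))
          + (rowMat a (fun j => ∑ c, v c * X c j) + rowMat a (fun j => ∑ c, v c * Eb a b c j))
          = rowMat a (fun j => (X b b) ^ n * (if j = b then 1 else 0) + ((∑ c, v c * X c j)
            + (∑ c, v c * Eb a b c j))) := by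
        rw [rowMat_add, rowMat_add]
      rw [← hcomb]
      abel

lemma one_add_mul_one_sub {a b : Fin d} (hab : a ≠ b) :
    ((1 : Matrix (Fin d) (Fin d) (ZMod q)) + Eb a b) * (1 - Eb a b) = 1 := by
  rw [mul_sub, mul_one, add_mul, one_mul, Eb_mul_Eb hab, add_zero, add_sub_cancel_right]

lemma one_sub_mul_one_add {a b : Fin d} (hab : a ≠ b) :
    ((1 : Matrix (Fin d) (Fin d) (ZMod q)) - Eb a b) * (1 + Eb a b) = 1 := by
  rw [sub_mul, one_mul, mul_add, mul_one, Eb_mul_Eb hab, add_zero, add_sub_cancel_right]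

lemma conj_pow {S : Type*} [Ring S] {u u' : S} (h1 : u * u' = 1) (h2 : u' * u = 1) (X : S) :
    ∀ n : ℕ, (u * X * u') ^ n = u * X ^ n * u'
  | 0 => by simp [h1]
  | (n + 1) => by
    rw [pow_succ, conj_pow h1 h2 X n,
      mul_assoc (u * X ^ n) u' (u * X * u'),
      show u' * (u * X * u') = X * u' by rw [← mul_assoc, ← mul_assoc, h2, one_mul],
      ← mul_assoc, mul_assoc u (X ^ n) X, ← pow_succ]

lemma upow {a b : Fin d} (hab : a ≠ b) (c : ZMod q) :
    ∀ n : ℕ, ((1 : Matrix (Fin d) (Fin d) (ZMod q)) + c • Eb a b) ^ n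
      = 1 + ((n : ZMod q) * c) • Eb a b
  | 0 => by simp
  | (n + 1) => by
    rw [pow_succ, upow hab c n, mul_add, mul_one, add_mul, one_mul, smul_mul_assoc,
      mul_smul_comm, Eb_mul_Eb hab, smul_zero, smul_zero, add_zero, add_assoc, ← add_smul]
    congr 2
    push_cast
    ring

lemma sigma1_iter {a b : Fin d} (X : Matrix (Fin d) (Fin d) (ZMod q)) :
    ∀ t : ℕ, (fun Y => (1 + Eb a b) * Y * (1 - Eb a b))^[t] X
      = (1 + Eb a b) ^ t * X * (1 - Eb a b) ^ t
  | 0 => by simp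
  | (t + 1) => by
    rw [Function.iterate_succ_apply', sigma1_iter X t]
    show (1 + Eb a b) * ((1 + Eb a b) ^ t * X * (1 - Eb a b) ^ t) * (1 - Eb a b) = _
    rw [pow_succ' (1 + Eb a b) t, pow_succ (1 - Eb a b) t]
    simp only [← mul_assoc]

lemma sigma1_iter_q {a b : Fin d} (hab : a ≠ b) (X : Matrix (Fin d) (Fin d) (ZMod q)) :
    (fun Y => (1 + Eb a b) * Y * (1 - Eb a b))^[q] X = X := by
  rw [sigma1_iter X q]
  have hE : ((1 : Matrix (Fin d) (Fin d) (ZMod q)) + Eb a b)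
      = 1 + (1 : ZMod q) • Eb a b := by rw [one_smul]
  have hE' : ((1 : Matrix (Fin d) (Fin d) (ZMod q)) - Eb a b)
      = 1 + (-1 : ZMod q) • Eb a b := by rw [neg_smul, one_smul, sub_eq_add_neg]
  rw [hE, hE', upow hab, upow hab, ZMod.natCast_self]
  simp

lemma fix1 {a b : Fin d} (hab : a ≠ b) (X : Matrix (Fin d) (Fin d) (ZMod q)) :
    (1 + Eb a b) * X * (1 - Eb a b) = X ↔ X * Eb a b = Eb a b * X := by
  constructor
  · intro h
    have h2 := congrArg (fun Y => Y * (1 + Eb a b)) h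
    rw [mul_assoc, one_sub_mul_one_add hab, mul_one] at h2
    rw [add_mul, one_mul, mul_add, mul_one] at h2
    exact (add_left_cancel h2).symm
  · intro h
    have hEXE : Eb a b * X * Eb a b = 0 := by
      rw [← h, mul_assoc, Eb_mul_Eb hab, mul_zero]
    rw [add_mul, one_mul, mul_sub, mul_one, add_mul, hEXE, add_zero, h, add_sub_cancel_right]

lemma conj_entry {a b : Fin d} (X : Matrix (Fin d) (Fin d) (ZMod q)) {i j : Fin d}
    (hia : i ≠ a) (hjb : j ≠ b) :
    ((1 + Eb a b) * X * (1 - Eb a b) : Matrix (Fin d) (Fin d) (ZMod q)) i j = X i j := by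
  rw [add_mul, one_mul, mul_sub, mul_one, add_mul]
  rw [Matrix.sub_apply, Matrix.add_apply, Matrix.add_apply]
  rw [Matrix.single_mul_apply_of_ne _ _ _ _ _ hia,
    Matrix.mul_single_apply_of_ne _ _ _ _ _ hjb,
    Matrix.mul_single_apply_of_ne _ _ _ _ _ hjb]
  ring

lemma trans_iter_q {a b : Fin d} (X : Matrix (Fin d) (Fin d) (ZMod q)) :
    (fun Y => Y + Eb a b)^[q] X = X := by
  have h : ∀ t : ℕ, (fun Y => Y + Eb a b)^[t] X = X + (t : ZMod q) • Eb a b := by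
    intro t
    induction t with
    | zero => simp
    | succ m ihm =>
      rw [Function.iterate_succ_apply', ihm]
      show X + (m : ZMod q) • Eb a b + Eb a b = _
      push_cast
      rw [add_smul, one_smul, add_assoc]
  rw [h q, ZMod.natCast_self, zero_smul, add_zero]

lemma trace_rowMat (a : Fin d) (v : Fin d → ZMod q) : (rowMat a v).trace = v a := by
  simp [Matrix.trace, Matrix.diag, rowMat_apply]

lemma zmod_nsmul_zero (x : ZMod q) : q • x = 0 := by
  rw [nsmul_eq_mul, ZMod.natCast_self, zero_mul]

end PartOne

section PartOneSums

variable {q : ℕ} [Fact q.Prime] [NeZero q] {d : ℕ}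

lemma filter_comm_eq (k : ℕ) (a b : Fin d) (hab : a ≠ b) :
    (Finset.univ.filter
        (fun x : Matrix (Fin d) (Fin d) (ZMod q) =>
          (fun Y => (1 + Eb a b) * Y * (1 - Eb a b)) x = x))
      = Finset.univ.filter (fun X => X * Eb a b = Eb a b * X) := by
  apply Finset.filter_congr
  intro x _
  show ((1 + Eb a b) * x * (1 - Eb a b) = x) ↔ (x * Eb a b = Eb a b * x)
  exact fix1 hab x

lemma filter_trans_empty (a b : Fin d)
    (C : Finset (Matrix (Fin d) (Fin d) (ZMod q))) :
    C.filter (fun x => (fun Y => Y + Eb a b) x = x) = ∅ := by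
  rw [Finset.filter_eq_empty_iff]
  intro X _
  intro hcon
  have hE0 : (Eb (q := q) a b) = 0 := add_eq_left.mp hcon
  have h3 : (Eb (q := q) a b) a b = 1 := Matrix.single_apply_same a b 1
  rw [hE0] at h3
  simp only [Matrix.zero_apply] at h3
  exact one_ne_zero h3.symm

lemma comm_closed_add {a b : Fin d} (hab : a ≠ b) {X : Matrix (Fin d) (Fin d) (ZMod q)}
    (hX : X * Eb a b = Eb a b * X) :
    (X + Eb a b) * Eb a b = Eb a b * (X + Eb a b) := by
  rw [add_mul, mul_add, Eb_mul_Eb hab, hX]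

lemma sum_entry_off (k : ℕ) (i j : Fin d) (hij : i ≠ j) :
    ∑ M : Matrix (Fin d) (Fin d) (ZMod q), (M ^ k) i j = 0 := by
  classical
  have hab : j ≠ i := fun h => hij h.symm
  have h1 := one_add_mul_one_sub (q := q) (d := d) hab
  have h2 := one_sub_mul_one_add (q := q) (d := d) hab
  have happ := orbit_sum_aux q Fact.out (fun Y => (1 + Eb j i) * Y * (1 - Eb j i))
      (sigma1_iter_q hab) (fun M => (M ^ k) i j) zmod_nsmul_zero Finset.univ.card Finset.univ
      le_rfl (fun x _ => Finset.mem_univ _) ?_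
  · rw [happ, filter_comm_eq k j i hab]
    apply Finset.sum_eq_zero
    intro X hX
    rw [Finset.mem_filter] at hX
    show (X ^ k) i j = 0
    exact pow_entry_col hX.2 k hij
  · intro M _
    show (((1 + Eb j i) * M * (1 - Eb j i)) ^ k : Matrix (Fin d) (Fin d) (ZMod q)) i j
      = (M ^ k) i j
    rw [conj_pow h1 h2 M k]
    exact conj_entry (M ^ k) hij (fun h => hij h.symm)

lemma sum_entry_diag3 (k : ℕ) (i a b : Fin d) (hab : a ≠ b) (hia : i ≠ a) (hib : i ≠ b) :
    ∑ M : Matrix (Fin d) (Fin d) (ZMod q), (M ^ k) i i = 0 := by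
  classical
  have h1 := one_add_mul_one_sub (q := q) (d := d) hab
  have h2 := one_sub_mul_one_add (q := q) (d := d) hab
  have happ := orbit_sum_aux q Fact.out (fun Y => (1 + Eb a b) * Y * (1 - Eb a b))
      (sigma1_iter_q hab) (fun M => (M ^ k) i i) zmod_nsmul_zero Finset.univ.card Finset.univ
      le_rfl (fun x _ => Finset.mem_univ _) ?_
  · rw [happ, filter_comm_eq k a b hab]
    set C : Finset (Matrix (Fin d) (Fin d) (ZMod q)) :=
      Finset.univ.filter (fun X => X * Eb a b = Eb a b * X) with hC
    have hCmem : ∀ X ∈ C, X * Eb a b = Eb a b * X := by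
      intro X hX
      rw [hC, Finset.mem_filter] at hX
      exact hX.2
    have happ2 := orbit_sum_aux q Fact.out (fun Y => Y + Eb a b)
        trans_iter_q (fun M => (M ^ k) i i) zmod_nsmul_zero C.card C le_rfl ?_ ?_
    · rw [happ2, filter_trans_empty a b C, Finset.sum_empty]
    · intro X hX
      rw [hC, Finset.mem_filter] at hX ⊢
      exact ⟨Finset.mem_univ _, comm_closed_add hab hX.2⟩
    · intro X hX
      obtain ⟨v, hva, hv⟩ := pert hab (hCmem X hX) k
      show ((X + Eb a b) ^ k : Matrix (Fin d) (Fin d) (ZMod q)) i i = (X ^ k) i i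
      rw [hv, Matrix.add_apply, rowMat_apply, if_neg hia, add_zero]
  · intro M _
    show (((1 + Eb a b) * M * (1 - Eb a b)) ^ k : Matrix (Fin d) (Fin d) (ZMod q)) i i
      = (M ^ k) i i
    rw [conj_pow h1 h2 M k]
    exact conj_entry (M ^ k) hia hib

lemma sum_trace (k : ℕ) (a b : Fin d) (hab : a ≠ b) :
    ∑ M : Matrix (Fin d) (Fin d) (ZMod q), (M ^ k).trace = 0 := by
  classical
  have h1 := one_add_mul_one_sub (q := q) (d := d) hab
  have h2 := one_sub_mul_one_add (q := q) (d := d) hab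
  have happ := orbit_sum_aux q Fact.out (fun Y => (1 + Eb a b) * Y * (1 - Eb a b))
      (sigma1_iter_q hab) (fun M => (M ^ k).trace) zmod_nsmul_zero Finset.univ.card Finset.univ
      le_rfl (fun x _ => Finset.mem_univ _) ?_
  · rw [happ, filter_comm_eq k a b hab]
    set C : Finset (Matrix (Fin d) (Fin d) (ZMod q)) :=
      Finset.univ.filter (fun X => X * Eb a b = Eb a b * X) with hC
    have hCmem : ∀ X ∈ C, X * Eb a b = Eb a b * X := by
      intro X hX
      rw [hC, Finset.mem_filter] at hX
      exact hX.2
    have happ2 := orbit_sum_aux q Fact.out (fun Y => Y + Eb a b)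
        trans_iter_q (fun M => (M ^ k).trace) zmod_nsmul_zero C.card C le_rfl ?_ ?_
    · rw [happ2, filter_trans_empty a b C, Finset.sum_empty]
    · intro X hX
      rw [hC, Finset.mem_filter] at hX ⊢
      exact ⟨Finset.mem_univ _, comm_closed_add hab hX.2⟩
    · intro X hX
      obtain ⟨v, hva, hv⟩ := pert hab (hCmem X hX) k
      show (((X + Eb a b) ^ k : Matrix (Fin d) (Fin d) (ZMod q))).trace = (X ^ k).trace
      rw [hv, Matrix.trace_add, trace_rowMat, hva, add_zero]
  · intro M _
    show ((((1 + Eb a b) * M * (1 - Eb a b)) ^ k : Matrix (Fin d) (Fin d) (ZMod q))).trace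
      = (M ^ k).trace
    rw [conj_pow h1 h2 M k, Matrix.trace_mul_cycle, h2, one_mul]

lemma sum_diag_eq (k : ℕ) (i j : Fin d) :
    ∑ M : Matrix (Fin d) (Fin d) (ZMod q), (M ^ k) i i
      = ∑ M : Matrix (Fin d) (Fin d) (ZMod q), (M ^ k) j j := by
  classical
  have hb := (Matrix.reindexAlgEquiv (ZMod q) (ZMod q) (Equiv.swap i j)).bijective
  have h1 : ∑ M : Matrix (Fin d) (Fin d) (ZMod q),
      ((((Matrix.reindexAlgEquiv (ZMod q) (ZMod q) (Equiv.swap i j)) M) ^ k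
        : Matrix (Fin d) (Fin d) (ZMod q)) j j)
      = ∑ M : Matrix (Fin d) (Fin d) (ZMod q), (M ^ k) j j :=
    Fintype.sum_bijective _ hb _ _ (fun M => rfl)
  rw [← h1]
  apply Finset.sum_congr rfl
  intro M _
  rw [← map_pow]
  rw [Matrix.reindexAlgEquiv_apply, Matrix.reindex_apply, Matrix.submatrix_apply]
  have hsymm : (Equiv.swap i j).symm j = i := by
    rw [Equiv.symm_swap, Equiv.swap_apply_right]
  rw [hsymm]

lemma exists_other {d : ℕ} (hd3 : 3 ≤ d) (i : Fin d) :
    ∃ a b : Fin d, a ≠ b ∧ i ≠ a ∧ i ≠ b := by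
  rcases Nat.lt_or_ge i.val 1 with h | h
  · exact ⟨⟨1, by omega⟩, ⟨2, by omega⟩, Fin.ne_of_val_ne (show (1:ℕ) ≠ 2 by omega),
      Fin.ne_of_val_ne (show i.val ≠ 1 by omega), Fin.ne_of_val_ne (show i.val ≠ 2 by omega)⟩
  · rcases Nat.lt_or_ge i.val 2 with h2 | h2
    · exact ⟨⟨0, by omega⟩, ⟨2, by omega⟩, Fin.ne_of_val_ne (show (0:ℕ) ≠ 2 by omega),
        Fin.ne_of_val_ne (show i.val ≠ 0 by omega), Fin.ne_of_val_ne (show i.val ≠ 2 by omega)⟩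
    · exact ⟨⟨0, by omega⟩, ⟨1, by omega⟩, Fin.ne_of_val_ne (show (0:ℕ) ≠ 1 by omega),
        Fin.ne_of_val_ne (show i.val ≠ 0 by omega), Fin.ne_of_val_ne (show i.val ≠ 1 by omega)⟩

end PartOneSums

/-- Part I : sum of k-th powers of all matrices over a prime field vanishes,
except in the case `d = 2`, `q = 2`. -/
theorem partI (q' d k : ℕ) [NeZero q'] (hq : q'.Prime) (hd : 2 ≤ d)
    (h2 : ¬(d = 2 ∧ q' = 2)) :
    ∑ M : Matrix (Fin d) (Fin d) (ZMod q'), M ^ k = 0 := by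
  haveI := Fact.mk hq
  ext i j
  rw [Matrix.sum_apply, Matrix.zero_apply]
  by_cases hij : i = j
  · subst hij
    by_cases hd3 : 3 ≤ d
    · obtain ⟨a, b, hab, hia, hib⟩ := exists_other hd3 i
      exact sum_entry_diag3 k i a b hab hia hib
    · have hd2 : d = 2 := by omega
      subst hd2
      have hq2 : q' ≠ 2 := fun h => h2 ⟨rfl, h⟩
      have h01 : (0 : Fin 2) ≠ 1 := by decide
      have htr := sum_trace (q := q') k (0 : Fin 2) 1 h01
      have htr2 : (∑ M : Matrix (Fin 2) (Fin 2) (ZMod q'), ((M ^ k) 0 0 + (M ^ k) 1 1)) = 0 := by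
        rw [← htr]
        apply Finset.sum_congr rfl
        intro M _
        rw [Matrix.trace_fin_two]
      rw [Finset.sum_add_distrib] at htr2
      have heq := sum_diag_eq (q := q') k (0 : Fin 2) (1 : Fin 2)
      have h2q : (2 : ZMod q') ≠ 0 := by
        intro hcon
        have hcast : ((2 : ℕ) : ZMod q') = 0 := by push_cast; exact hcon
        rw [ZMod.natCast_eq_zero_iff] at hcast
        exact hq2 ((Nat.prime_dvd_prime_iff_eq hq Nat.prime_two).mp hcast)
      have hsum : (2 : ZMod q') * (∑ M : Matrix (Fin 2) (Fin 2) (ZMod q'), (M ^ k) 0 0) = 0 := by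
        rw [two_mul]
        nth_rewrite 2 [heq]
        exact htr2
      have h00 : (∑ M : Matrix (Fin 2) (Fin 2) (ZMod q'), (M ^ k) 0 0) = 0 :=
        (mul_eq_zero.mp hsum).resolve_left h2q
      have h11 : (∑ M : Matrix (Fin 2) (Fin 2) (ZMod q'), (M ^ k) 1 1) = 0 := by
        rw [← heq]; exact h00
      fin_cases i
      · exact h00
      · exact h11
  · exact sum_entry_off k i j hij

/-! ### Part II : prime power modulus, `s ≥ 2` -/

lemma expand_pow {S : Type*} [Ring S] (L B : S) (hB : ∀ X : S, B * X * B = 0) :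
    ∀ n : ℕ, (L + B) ^ n = L ^ n + ∑ t ∈ Finset.range n, L ^ t * B * L ^ (n - 1 - t)
  | 0 => by simp
  | (n + 1) => by
    rw [pow_succ, expand_pow L B hB n, add_mul,
      mul_add (L ^ n), mul_add (∑ t ∈ Finset.range n, L ^ t * B * L ^ (n - 1 - t)),
      Finset.sum_mul, Finset.sum_mul]
    have hz : ∀ t ∈ Finset.range n, (L ^ t * B * L ^ (n - 1 - t)) * B = 0 := by
      intro t _
      rw [mul_assoc (L ^ t * B), mul_assoc (L ^ t), ← mul_assoc B, hB, mul_zero]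
    rw [Finset.sum_congr rfl hz, Finset.sum_const_zero, add_zero]
    have hl : ∀ t ∈ Finset.range n, (L ^ t * B * L ^ (n - 1 - t)) * L
        = L ^ t * B * L ^ (n - t) := by
      intro t ht
      rw [Finset.mem_range] at ht
      rw [mul_assoc (L ^ t * B), ← pow_succ, show n - 1 - t + 1 = n - t by omega]
    rw [Finset.sum_congr rfl hl, ← pow_succ, Finset.sum_range_succ]
    have hee : ∀ t ∈ Finset.range n, L ^ t * B * L ^ (n + 1 - 1 - t)
        = L ^ t * B * L ^ (n - t) := by
      intro t _
      rw [show n + 1 - 1 - t = n - t by omega]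
    rw [Finset.sum_congr rfl hee, show n + 1 - 1 - n = 0 by omega, pow_zero, mul_one]
    abel

lemma card_mat (β : Type*) [Fintype β] [DecidableEq β] (d : ℕ) :
    Fintype.card (Matrix (Fin d) (Fin d) β) = (Fintype.card β) ^ (d * d) := by
  rw [Fintype.card_congr
    ((Matrix.of : (Fin d → Fin d → β) ≃ Matrix (Fin d) (Fin d) β).symm)]
  rw [Fintype.card_fun, Fintype.card_fun, Fintype.card_fin, ← pow_mul]

lemma entry_sum {β G : Type*} [Fintype β] [DecidableEq β] [AddCommMonoid G] {d : ℕ}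
    (g : β → G) (i j : Fin d) :
    ∑ A : Matrix (Fin d) (Fin d) β, g (A i j)
      = (Fintype.card ({ x : Fin d × Fin d // x ≠ (i, j) } → β)) • ∑ z : β, g z := by
  classical
  have h1 : ∑ A : Matrix (Fin d) (Fin d) β, g (A i j)
      = ∑ F : Fin d × Fin d → β, g (F (i, j)) :=
    Fintype.sum_bijective
      ((Matrix.of : (Fin d → Fin d → β) ≃ Matrix (Fin d) (Fin d) β).symm.trans
        (Equiv.curry (Fin d) (Fin d) β).symm)
      (Equiv.bijective _) _ _ (fun A => rfl)
  rw [h1]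
  have h2 : ∑ F : Fin d × Fin d → β, g (F (i, j))
      = ∑ y : β × ({ x : Fin d × Fin d // x ≠ (i, j) } → β), g y.1 :=
    Fintype.sum_bijective (Equiv.funSplitAt (i, j) β)
      (Equiv.bijective _) _ _ (fun F => rfl)
  rw [h2, Fintype.sum_prod_type]
  have h3 : ∀ v : β, (∑ _w : ({ x : Fin d × Fin d // x ≠ (i, j) } → β), g v)
      = (Fintype.card ({ x : Fin d × Fin d // x ≠ (i, j) } → β)) • g v := by
    intro v
    rw [Finset.sum_const, Finset.card_univ]
  rw [Finset.sum_congr rfl (fun v _ => h3 v), ← Finset.smul_sum]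

lemma subtype_ne_nonempty {d : ℕ} (hd : 2 ≤ d) (i j : Fin d) :
    1 ≤ Fintype.card { x : Fin d × Fin d // x ≠ (i, j) } := by
  rw [Nat.succ_le_iff, Fintype.card_pos_iff]
  rcases Nat.lt_or_ge i.val 1 with h | h
  · refine ⟨⟨(⟨1, by omega⟩, j), fun hcon => ?_⟩⟩
    have h1 : (⟨1, by omega⟩ : Fin d) = i := congrArg Prod.fst hcon
    have h2 : (1 : ℕ) = i.val := congrArg Fin.val h1
    omega
  · refine ⟨⟨(⟨0, by omega⟩, j), fun hcon => ?_⟩⟩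
    have h1 : (⟨0, by omega⟩ : Fin d) = i := congrArg Prod.fst hcon
    have h2 : (0 : ℕ) = i.val := congrArg Fin.val h1
    omega

lemma sum_val (m : ℕ) [NeZero m] : (∑ z : ZMod m, z.val) * 2 = m * (m - 1) := by
  have himg : Finset.range m = Finset.univ.image (ZMod.val : ZMod m → ℕ) := by
    ext t
    simp only [Finset.mem_range, Finset.mem_image, Finset.mem_univ, true_and]
    constructor
    · intro ht; exact ⟨(t : ZMod m), ZMod.val_cast_of_lt ht⟩
    · rintro ⟨z, rfl⟩; exact ZMod.val_lt z
  have h : ∑ z : ZMod m, z.val = ∑ t ∈ Finset.range m, t := by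
    rw [himg, Finset.sum_image (fun x _ y _ h => ZMod.val_injective m h)]
  rw [h, Finset.sum_range_id_mul_two]

section PartTwo

variable (p : ℕ) [hp : Fact p.Prime]

lemma step (d k s : ℕ) (hd : 2 ≤ d) (hs : 2 ≤ s) :
    ∃ T : Matrix (Fin d) (Fin d) (ZMod (p ^ s)),
      (∑ M : Matrix (Fin d) (Fin d) (ZMod (p ^ s)), M ^ k) = (p ^ (d * d) : ℕ) • T ∧
      T.map (ZMod.castHom (pow_dvd_pow p (by omega : s - 1 ≤ s)) (ZMod (p ^ (s - 1)))) =
        ∑ N : Matrix (Fin d) (Fin d) (ZMod (p ^ (s - 1))), N ^ k := by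
  classical
  haveI : NeZero p := ⟨hp.out.ne_zero⟩
  have hppos : 0 < p := hp.out.pos
  set m' : ℕ := p ^ (s - 1) with hm'
  have hm'pos : 0 < m' := Nat.pow_pos hppos
  have hdvd : m' ∣ p ^ s := pow_dvd_pow p (by omega)
  set π : ZMod (p ^ s) →+* ZMod (p ^ (s - 1)) :=
    ZMod.castHom (pow_dvd_pow p (by omega : s - 1 ≤ s)) (ZMod (p ^ (s - 1))) with hπ
  set l : ZMod (p ^ (s - 1)) → ZMod (p ^ s) := fun x => (x.val : ZMod (p ^ s)) with hl
  set l' : ZMod p → ZMod (p ^ s) := fun z => (z.val : ZMod (p ^ s)) with hl'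
  have hsec : ∀ x : ZMod (p ^ (s - 1)), π (l x) = x := by
    intro x
    rw [hl, hπ]
    show ZMod.castHom _ _ ((x.val : ZMod (p ^ s))) = x
    rw [map_natCast]
    exact ZMod.natCast_rightInverse x
  have hmapsec : ∀ N : Matrix (Fin d) (Fin d) (ZMod (p ^ (s - 1))), (N.map l).map π = N := by
    intro N
    rw [Matrix.map_map]
    have hcomp : (π ∘ l) = id := funext hsec
    rw [hcomp, Matrix.map_id]
  have hπm' : π ((m' : ℕ) : ZMod (p ^ s)) = 0 := by
    rw [map_natCast, hm', ZMod.natCast_self]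
  have hmapadd : ∀ X Y : Matrix (Fin d) (Fin d) (ZMod (p ^ s)),
      (X + Y).map π = X.map π + Y.map π := by
    intro X Y; ext i j
    simp [Matrix.map_apply, Matrix.add_apply]
  have hmapsmul : ∀ (c : ZMod (p ^ s)) (X : Matrix (Fin d) (Fin d) (ZMod (p ^ s))),
      (c • X).map π = π c • X.map π := by
    intro c X; ext i j
    simp [Matrix.map_apply, Matrix.smul_apply, smul_eq_mul]
  set c' : ZMod (p ^ s) := ((m' : ℕ) : ZMod (p ^ s)) with hc'
  set Ψ : Matrix (Fin d) (Fin d) (ZMod (p ^ (s - 1))) × Matrix (Fin d) (Fin d) (ZMod p)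
      → Matrix (Fin d) (Fin d) (ZMod (p ^ s)) :=
    fun NA => NA.1.map l + c' • NA.2.map l' with hΨ
  have hπΨ : ∀ NA, (Ψ NA).map π = NA.1 := by
    intro NA
    rw [hΨ]
    show (NA.1.map l + c' • NA.2.map l').map π = NA.1
    rw [hmapadd, hmapsmul, hπm', zero_smul, add_zero, hmapsec]
  have hltm : ∀ u : ZMod p, m' * u.val < p ^ s := by
    intro u
    have h2 : u.val < p := ZMod.val_lt u
    have h3 : m' * u.val < m' * p := by
      exact (mul_lt_mul_iff_right₀ hm'pos).mpr h2
    have h4 : m' * p = p ^ s := by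
      rw [hm', ← pow_succ]
      congr 1
      omega
    omega
  have hstrip : ∀ z w : ZMod p, c' * l' z = c' * l' w → z = w := by
    intro z w hzw
    have h1 : ((m' * z.val : ℕ) : ZMod (p ^ s)) = ((m' * w.val : ℕ) : ZMod (p ^ s)) := by
      push_cast
      exact hzw
    have h5 := congrArg ZMod.val h1
    rw [ZMod.val_cast_of_lt (hltm z), ZMod.val_cast_of_lt (hltm w)] at h5
    have h6 : z.val = w.val := Nat.eq_of_mul_eq_mul_left hm'pos h5
    exact ZMod.val_injective p h6
  have hinj : Function.Injective Ψ := by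
    intro x y hxy
    have h1 : x.1 = y.1 := by rw [← hπΨ x, ← hπΨ y, hxy]
    have h2 : c' • x.2.map l' = c' • y.2.map l' := by
      have h3 : x.1.map l + c' • x.2.map l' = y.1.map l + c' • y.2.map l' := hxy
      rw [h1] at h3
      exact add_left_cancel h3
    have h4 : x.2 = y.2 := by
      ext i j
      apply hstrip
      have h5 : (c' • x.2.map l') i j = (c' • y.2.map l') i j := by rw [h2]
      simpa [Matrix.smul_apply, Matrix.map_apply, smul_eq_mul] using h5
    exact Prod.ext h1 h4
  have hcard : Fintype.card (Matrix (Fin d) (Fin d) (ZMod (p ^ (s - 1)))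
        × Matrix (Fin d) (Fin d) (ZMod p))
      = Fintype.card (Matrix (Fin d) (Fin d) (ZMod (p ^ s))) := by
    rw [Fintype.card_prod, card_mat, card_mat, card_mat, ZMod.card, ZMod.card, ZMod.card,
      ← mul_pow]
    congr 1
    rw [← pow_succ]
    congr 1
    omega
  have hbij : Function.Bijective Ψ :=
    (Fintype.bijective_iff_injective_and_card Ψ).mpr ⟨hinj, hcard⟩
  have hsum0 : (∑ M : Matrix (Fin d) (Fin d) (ZMod (p ^ s)), M ^ k)
      = ∑ NA : Matrix (Fin d) (Fin d) (ZMod (p ^ (s - 1))) × Matrix (Fin d) (Fin d) (ZMod p),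
        (Ψ NA) ^ k :=
    (Fintype.sum_bijective Ψ hbij _ _ (fun NA => rfl)).symm
  have hc'c' : c' * c' = 0 := by
    rw [hc', ← Nat.cast_mul, ZMod.natCast_eq_zero_iff, hm', ← pow_add]
    exact pow_dvd_pow p (by omega)
  have hBXB : ∀ (Y Z X : Matrix (Fin d) (Fin d) (ZMod (p ^ s))),
      (c' • Y) * X * (c' • Z) = 0 := by
    intro Y Z X
    rw [smul_mul_assoc, smul_mul_assoc, mul_smul_comm, smul_smul, hc'c', zero_smul]
  have hinner : ∀ N : Matrix (Fin d) (Fin d) (ZMod (p ^ (s - 1))),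
      (∑ A : Matrix (Fin d) (Fin d) (ZMod p), (Ψ (N, A)) ^ k)
        = (p ^ (d * d) : ℕ) • (N.map l) ^ k := by
    intro N
    have hexp : ∀ A : Matrix (Fin d) (Fin d) (ZMod p), (Ψ (N, A)) ^ k = (N.map l) ^ k +
        ∑ t ∈ Finset.range k, (N.map l) ^ t * (c' • A.map l') * (N.map l) ^ (k - 1 - t) := by
      intro A
      rw [hΨ]
      show (N.map l + c' • A.map l') ^ k = _
      exact expand_pow _ _ (fun X => hBXB _ _ X) k
    rw [Finset.sum_congr rfl (fun A _ => hexp A), Finset.sum_add_distrib, Finset.sum_const,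
      Finset.card_univ, card_mat, ZMod.card]
    have hz : (∑ A : Matrix (Fin d) (Fin d) (ZMod p), ∑ t ∈ Finset.range k,
        (N.map l) ^ t * (c' • A.map l') * (N.map l) ^ (k - 1 - t)) = 0 := by
      rw [Finset.sum_comm]
      apply Finset.sum_eq_zero
      intro t _
      have hlin : (∑ A : Matrix (Fin d) (Fin d) (ZMod p),
          (N.map l) ^ t * (c' • A.map l') * (N.map l) ^ (k - 1 - t))
          = (N.map l) ^ t * (c' • ∑ A : Matrix (Fin d) (Fin d) (ZMod p), A.map l')
            * (N.map l) ^ (k - 1 - t) := by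
        rw [← Finset.sum_mul, ← Finset.mul_sum, ← Finset.smul_sum]
      rw [hlin]
      have hZ : (c' • ∑ A : Matrix (Fin d) (Fin d) (ZMod p), A.map l') = 0 := by
        ext i j
        rw [Matrix.smul_apply, Matrix.sum_apply, Matrix.zero_apply]
        have h6 : (∑ A : Matrix (Fin d) (Fin d) (ZMod p), (A.map l') i j)
            = ∑ A : Matrix (Fin d) (Fin d) (ZMod p), l' (A i j) := rfl
        rw [h6, entry_sum l' i j]
        set c2 : ℕ := Fintype.card ({ x : Fin d × Fin d // x ≠ (i, j) } → ZMod p) with hc2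
        have hSig : (∑ z : ZMod p, l' z) = ((∑ z : ZMod p, z.val : ℕ) : ZMod (p ^ s)) := by
          rw [Nat.cast_sum]
        have hgoal : c' • (c2 • ∑ z : ZMod p, l' z)
            = (((m' * (c2 * ∑ z : ZMod p, z.val)) : ℕ) : ZMod (p ^ s)) := by
          rw [hSig, hc', smul_eq_mul, nsmul_eq_mul]
          push_cast
          ring
        rw [hgoal, ZMod.natCast_eq_zero_iff]
        have hc2card : c2 = p ^ (Fintype.card { x : Fin d × Fin d // x ≠ (i, j) }) := by
          rw [hc2, Fintype.card_fun, ZMod.card]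
        have hc2pos : 1 ≤ Fintype.card { x : Fin d × Fin d // x ≠ (i, j) } :=
          subtype_ne_nonempty hd i j
        rcases eq_or_ne p 2 with hp2 | hp2
        · have hsv := sum_val p
          have hsv2 : (∑ z : ZMod p, z.val) * 2 = 2 := by rw [hsv, hp2]
          have hSigval : (∑ z : ZMod p, z.val) = 1 := by omega
          have heq2 : m' * (c2 * ∑ z : ZMod p, z.val)
              = p ^ (s - 1 + Fintype.card { x : Fin d × Fin d // x ≠ (i, j) }) := by
            rw [hSigval, mul_one, hc2card, hm', ← pow_add]
          exact dvd_trans (pow_dvd_pow p (by omega)) (dvd_of_eq heq2.symm)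
        · have hpodd : ¬ (p ∣ 2) := by
            intro hdvd2
            exact hp2 ((Nat.prime_dvd_prime_iff_eq hp.out Nat.prime_two).mp hdvd2)
          have hpSig : p ∣ (∑ z : ZMod p, z.val) := by
            have h7 : p ∣ (∑ z : ZMod p, z.val) * 2 := by
              rw [sum_val p]
              exact Dvd.intro _ rfl
            exact (Nat.Prime.coprime_iff_not_dvd hp.out |>.mpr hpodd).dvd_of_dvd_mul_right h7
          obtain ⟨w, hw⟩ := hpSig
          have h9 : p ^ (s - 1) * p = p ^ s := by
            rw [← pow_succ]
            congr 1
            omega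
          have h8 : m' * (c2 * ∑ z : ZMod p, z.val) = p ^ s * (c2 * w) := by
            rw [hw, hm']
            calc p ^ (s - 1) * (c2 * (p * w)) = (p ^ (s - 1) * p) * (c2 * w) := by ring
              _ = p ^ s * (c2 * w) := by rw [h9]
          exact ⟨c2 * w, h8⟩
      rw [hZ, Matrix.mul_zero, Matrix.zero_mul]
    rw [hz, add_zero]
  refine ⟨∑ N : Matrix (Fin d) (Fin d) (ZMod (p ^ (s - 1))), (N.map l) ^ k, ?_, ?_⟩
  · rw [hsum0, Fintype.sum_prod_type]
    rw [Finset.sum_congr rfl (fun N _ => hinner N), ← Finset.smul_sum]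
  · have hmain : π.mapMatrix (∑ N : Matrix (Fin d) (Fin d) (ZMod (p ^ (s - 1))), (N.map l) ^ k)
        = ∑ N : Matrix (Fin d) (Fin d) (ZMod (p ^ (s - 1))), N ^ k := by
      rw [map_sum]
      apply Finset.sum_congr rfl
      intro N _
      rw [map_pow, RingHom.mapMatrix_apply, hmapsec]
    rw [← hmain, RingHom.mapMatrix_apply, hπ]

lemma partII (d k s : ℕ) (hd : 2 ≤ d) (hs : 2 ≤ s) :
    ∑ M : Matrix (Fin d) (Fin d) (ZMod (p ^ s)), M ^ k = 0 := by
  haveI : NeZero p := ⟨hp.out.ne_zero⟩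
  have hdd : 4 ≤ d * d := Nat.mul_le_mul hd hd
  induction s, hs using Nat.le_induction with
  | base =>
    obtain ⟨T, hT1, _⟩ := step p d k 2 hd le_rfl
    rw [hT1]
    ext i j
    rw [Matrix.smul_apply, Matrix.zero_apply, nsmul_eq_mul]
    have h1 : ((p ^ (d * d) : ℕ) : ZMod (p ^ 2)) = 0 := by
      rw [ZMod.natCast_eq_zero_iff]
      exact pow_dvd_pow p (by omega)
    rw [h1, zero_mul]
  | succ n hn ihn =>
    obtain ⟨T, hT1, hT2⟩ := step p d k (n + 1) hd (by omega)
    rw [hT1]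
    have hT20 : T.map (ZMod.castHom (pow_dvd_pow p (by omega : n + 1 - 1 ≤ n + 1))
        (ZMod (p ^ (n + 1 - 1)))) = 0 := by
      rw [hT2]
      exact ihn
    ext i j
    rw [Matrix.smul_apply, Matrix.zero_apply, nsmul_eq_mul]
    have h1 : (ZMod.castHom (pow_dvd_pow p (by omega : n + 1 - 1 ≤ n + 1))
        (ZMod (p ^ (n + 1 - 1)))) (T i j) = 0 := by
      have h2 : (T.map (ZMod.castHom (pow_dvd_pow p (by omega : n + 1 - 1 ≤ n + 1))
          (ZMod (p ^ (n + 1 - 1))))) i j = 0 := by rw [hT20]; rfl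
      exact h2
    have h3 : (((T i j).val : ℕ) : ZMod (p ^ (n + 1 - 1))) = 0 := by
      rw [← h1, ZMod.castHom_apply, ZMod.natCast_val]
    rw [ZMod.natCast_eq_zero_iff] at h3
    obtain ⟨c, hc⟩ := h3
    have h4 : T i j = ((p ^ (n + 1 - 1) * c : ℕ) : ZMod (p ^ (n + 1))) := by
      rw [← hc]
      exact (ZMod.natCast_rightInverse (T i j)).symm
    rw [h4, ← Nat.cast_mul, ZMod.natCast_eq_zero_iff]
    have h5 : p ^ (d * d) * (p ^ (n + 1 - 1) * c) = p ^ (d * d + (n + 1 - 1)) * c := by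
      rw [← mul_assoc, ← pow_add]
    rw [h5]
    exact Dvd.dvd.mul_right (pow_dvd_pow p (by omega)) c

end PartTwo

end Stmt5Aux

theorem stmt_5 (p d s k : ℕ) (hp : p.Prime) [NeZero (p ^ s)] (hd : 2 ≤ d) (hs : 1 ≤ s) (hk : 1 ≤ k)
    (h : ¬(d = 2 ∧ p = 2 ∧ s = 1)) :
    ∑ M : Matrix (Fin d) (Fin d) (ZMod (p ^ s)), M ^ k = 0 := by
  haveI : Fact p.Prime := ⟨hp⟩
  rcases eq_or_lt_of_le hs with hs1 | hs2
  · have hq : (p ^ s).Prime := by rw [← hs1, pow_one]; exact hp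
    refine Stmt5Aux.partI (p ^ s) d k hq hd ?_
    rintro ⟨hd2, hq2⟩
    apply h
    refine ⟨hd2, ?_, hs1.symm⟩
    rw [← hs1, pow_one] at hq2
    exact hq2
  · exact Stmt5Aux.partII p d k s hd hs2
end

section
/- Let m, n, d, k ≥ 1 with m dividing n. Then the sum of M^k over all d×d integer matrices M with entries in {0,...,n−1} is congruent entrywise modulo m to (n/m)^{d^2} times the sum of M^k over all d×d integer matrices M with entries in {0,...,m−1}. -/
theorem stmt_6 (m n d k : ℕ) (hm : 1 ≤ m) (hn : 1 ≤ n) (hd : 1 ≤ d) (hk : 1 ≤ k)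
    (hdvd : m ∣ n) (i j : Fin d) :
    (∑ M : Matrix (Fin d) (Fin d) (Fin n), (M.map fun x => ((x : ℕ) : ℤ)) ^ k) i j ≡
    ((n / m : ℕ) : ℤ) ^ (d ^ 2) *
      (∑ M : Matrix (Fin d) (Fin d) (Fin m), (M.map fun x => ((x : ℕ) : ℤ)) ^ k) i j
      [ZMOD m] := by
  have hmn : (n / m) * m = n := Nat.div_mul_cancel hdvd
  rw [← ZMod.intCast_eq_intCast_iff]
  -- casting the integer sums into ZMod m
  have cast_sum : ∀ N : ℕ,
      (((∑ M : Matrix (Fin d) (Fin d) (Fin N), (M.map fun x => ((x : ℕ) : ℤ)) ^ k) i j : ℤ) : ZMod m)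
      = (∑ M : Matrix (Fin d) (Fin d) (Fin N), (M.map fun x => ((x : ℕ) : ZMod m)) ^ k) i j := by
    intro N
    rw [Matrix.sum_apply, Matrix.sum_apply, Int.cast_sum]
    refine Finset.sum_congr rfl fun M _ => ?_
    have h1 : ((M.map fun x => ((x : ℕ) : ℤ)) ^ k).map (Int.cast : ℤ → ZMod m)
        = ((M.map fun x => ((x : ℕ) : ℤ)).map (Int.cast : ℤ → ZMod m)) ^ k := by
      have := map_pow (RingHom.mapMatrix (Int.castRingHom (ZMod m)))
        (M.map fun x => ((x : ℕ) : ℤ)) k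
      simpa [RingHom.mapMatrix_apply] using this
    have h2 : ((M.map fun x => ((x : ℕ) : ℤ)).map (Int.cast : ℤ → ZMod m))
        = M.map fun x => ((x : ℕ) : ZMod m) := by
      ext a b
      simp
    calc (((((M.map fun x => ((x : ℕ) : ℤ)) ^ k)) i j : ℤ) : ZMod m)
        = (((M.map fun x => ((x : ℕ) : ℤ)) ^ k).map (Int.cast : ℤ → ZMod m)) i j := rfl
      _ = ((M.map fun x => ((x : ℕ) : ZMod m)) ^ k) i j := by rw [h1, h2]
  -- the counting argument in ZMod m
  let e : Fin n ≃ Fin (n / m) × Fin m := (finCongr hmn.symm).trans finProdFinEquiv.symm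
  have he : ∀ y : Fin (n / m) × Fin m, (((e.symm y : Fin n) : ℕ) : ZMod m) = ((y.2 : ℕ) : ZMod m) := by
    intro y
    have : ((e.symm y : Fin n) : ℕ) = (y.2 : ℕ) + m * (y.1 : ℕ) := by
      simp [e, finProdFinEquiv]
    rw [this]
    push_cast
    simp
  let E : (Matrix (Fin d) (Fin d) (Fin (n / m)) × Matrix (Fin d) (Fin d) (Fin m))
      ≃ Matrix (Fin d) (Fin d) (Fin n) :=
    { toFun := fun p => Matrix.of fun a b => e.symm (p.1 a b, p.2 a b)
      invFun := fun M => (Matrix.of fun a b => (e (M a b)).1, Matrix.of fun a b => (e (M a b)).2)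
      left_inv := by
        intro p
        refine Prod.ext ?_ ?_ <;> ext a b <;>
          simp only [Matrix.of_apply, Equiv.apply_symm_apply]
      right_inv := by
        intro M
        ext a b
        simp [Equiv.symm_apply_apply, Equiv.apply_symm_apply] }
  have key : (∑ M : Matrix (Fin d) (Fin d) (Fin n), (M.map fun x => ((x : ℕ) : ZMod m)) ^ k) i j
      = (((n / m) ^ (d ^ 2) : ℕ) : ZMod m) *
        (∑ M : Matrix (Fin d) (Fin d) (Fin m), (M.map fun x => ((x : ℕ) : ZMod m)) ^ k) i j := by
    rw [← Equiv.sum_comp E (fun M => (M.map fun x => ((x : ℕ) : ZMod m)) ^ k)]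
    have hEmap : ∀ p : Matrix (Fin d) (Fin d) (Fin (n / m)) × Matrix (Fin d) (Fin d) (Fin m),
        ((E p).map fun x => ((x : ℕ) : ZMod m)) = p.2.map fun x => ((x : ℕ) : ZMod m) := by
      intro p
      ext a b
      simp only [Matrix.map_apply]
      exact he (p.1 a b, p.2 a b)
    rw [Fintype.sum_prod_type]
    simp only [hEmap]
    rw [Finset.sum_const, Matrix.sum_apply, Matrix.smul_apply, ← Matrix.sum_apply]
    simp only [Finset.card_univ, smul_eq_mul, nsmul_eq_mul]
    congr 1
    norm_cast
    rw [Fintype.card_eq_nat_card]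
    simp [Matrix, pow_mul, sq, Nat.card_fun]
  rw [Int.cast_mul, Int.cast_pow, Int.cast_natCast, cast_sum n, cast_sum m, key, Nat.cast_pow]
end

section
/- Let s ≥ 2, τ ≥ 1, and β₁,...,β_τ positive integers with some β_i > 1 odd. Then Σ_{x₁,...,x_τ = 0}^{2^s−1} x₁^{β₁}···x_τ^{β_τ} ≡ 0 (mod 2^s). -/
lemma sq_zero (s : ℕ) (hs : 2 ≤ s) (x : ZMod (2^s)) (hx : x + x = 0) : x ^ 2 = 0 := by
  have hN : 0 < 2^s := Nat.pow_pos (by norm_num)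
  haveI : NeZero (2^s) := ⟨hN.ne'⟩
  have hv : ((x.val : ℕ) : ZMod (2^s)) = x := ZMod.natCast_zmod_val x
  have h2 : ((2 * x.val : ℕ) : ZMod (2^s)) = 0 := by
    push_cast; rw [hv, two_mul]; exact hx
  rw [ZMod.natCast_eq_zero_iff] at h2
  have hdvd : 2^(s-1) ∣ x.val := by
    have h2s : (2:ℕ)^s = 2 * 2^(s-1) := by
      rw [← pow_succ']; congr 1; omega
    have h2' : 2 * 2^(s-1) ∣ 2 * x.val := h2s ▸ h2
    exact (mul_dvd_mul_iff_left (two_ne_zero)).mp h2'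
  obtain ⟨m, hm⟩ := hdvd
  have hd : (2:ℕ)^s ∣ x.val ^ 2 := by
    rw [hm]
    calc (2:ℕ)^s ∣ 2^((s-1)*2) := pow_dvd_pow 2 (by omega)
    _ ∣ (2^(s-1)*m)^2 := by rw [mul_pow, pow_mul]; exact Dvd.intro _ rfl
  calc x ^ 2 = ((x.val ^ 2 : ℕ) : ZMod (2^s)) := by push_cast [hv]; ring
  _ = 0 := (ZMod.natCast_eq_zero_iff _ _).mpr hd

lemma zmod_sum_zero (s β : ℕ) (hs : 2 ≤ s) (hβ1 : 1 < β) (hβo : Odd β) :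
    ∑ x : ZMod (2^s), x ^ β = 0 := by
  apply Finset.sum_ninvolution (fun x => -x)
  · intro a
    simp [hβo.neg_pow]
  · intro a ha hne
    apply ha
    have h2 : a + a = 0 := by
      have := hne.symm
      linear_combination this
    have hsq : a ^ 2 = 0 := sq_zero s hs a h2
    calc a ^ β = a ^ (β - 2) * a ^ 2 := by rw [← pow_add]; congr 1; omega
    _ = 0 := by rw [hsq, mul_zero]
  · intro a; exact Finset.mem_univ _
  · intro a; exact neg_neg a

lemma int_sum_dvd (s β : ℕ) (hs : 2 ≤ s) (hβ1 : 1 < β) (hβo : Odd β) :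
    ((2:ℤ)^s) ∣ ∑ y : Fin (2^s), ((y : ℕ) : ℤ) ^ β := by
  have hN : 0 < 2^s := Nat.pow_pos (by norm_num)
  haveI : NeZero (2^s) := ⟨hN.ne'⟩
  have key : ((∑ y : Fin (2^s), ((y : ℕ) : ℤ) ^ β : ℤ) : ZMod (2^s)) = 0 := by
    push_cast
    have hbij : Function.Bijective (fun y : Fin (2^s) => ((y : ℕ) : ZMod (2^s))) := by
      rw [Fintype.bijective_iff_injective_and_card]
      constructor
      · intro a b hab
        simp only at hab
        have := congrArg ZMod.val hab
        rw [ZMod.val_cast_of_lt a.isLt, ZMod.val_cast_of_lt b.isLt] at this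
        exact Fin.ext this
      · simp [ZMod.card]
    calc ∑ y : Fin (2^s), ((y : ℕ) : ZMod (2^s)) ^ β
        = ∑ x : ZMod (2^s), x ^ β := Fintype.sum_bijective _ hbij _ _ (fun y => rfl)
    _ = 0 := zmod_sum_zero s β hs hβ1 hβo
  rwa [ZMod.intCast_zmod_eq_zero_iff_dvd, Nat.cast_pow, Nat.cast_ofNat] at key

theorem stmt_14 (s τ : ℕ) (hs : 2 ≤ s) (hτ : 1 ≤ τ) (β : Fin τ → ℕ)
    (hβ : ∀ i, 0 < β i) (h : ∃ i, 1 < β i ∧ Odd (β i)) :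
    ∑ x : Fin τ → Fin (2 ^ s), ∏ i, ((x i : ℕ) : ℤ) ^ β i ≡ 0 [ZMOD (2 ^ s)] := by
  rw [Int.modEq_zero_iff_dvd]
  have hfact : ∑ x : Fin τ → Fin (2^s), ∏ i, ((x i : ℕ):ℤ)^β i
      = ∏ i, ∑ y : Fin (2^s), ((y:ℕ):ℤ)^β i := by
    rw [Finset.prod_univ_sum, Fintype.piFinset_univ]
  rw [hfact]
  obtain ⟨i₀, hi1, hio⟩ := h
  exact dvd_trans (int_sum_dvd s (β i₀) hs hi1 hio)
    (Finset.dvd_prod_of_mem _ (Finset.mem_univ i₀))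
end

section
/- Let p be an odd prime, s ≥ 2, d ≥ 2, r ≥ 2, and let w be a monomial in r non-commuting variables of positive total degree. Then Σ over all r-tuples (A₁,...,A_r) of matrices in M_d(Z/p^sZ) of w(A₁,...,A_r) is the zero matrix. -/
open Finset

/-- Nat-level: `p^(s-1)` divides the power sum `∑_{i < p^s} i^m`. -/
lemma natA (p m : ℕ) : ∀ s : ℕ, p ^ (s - 1) ∣ ∑ i ∈ Finset.range (p ^ s), i ^ m := by
  intro s
  induction s with
  | zero => simp
  | succ s ih =>
    rcases Nat.eq_zero_or_pos s with hs | hs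
    · subst hs; simp
    have hps : p ^ s = p * p ^ (s - 1) := by
      rw [← pow_succ']
      congr 1
      omega
    have hcong : ((∑ i ∈ Finset.range (p ^ (s + 1)), i ^ m : ℕ) : ZMod (p ^ s))
        = ((p * ∑ i ∈ Finset.range (p ^ s), i ^ m : ℕ) : ZMod (p ^ s)) := by
      have h1 : p ^ (s + 1) = p * p ^ s := by ring
      push_cast
      rw [h1,
        ← Fin.sum_univ_eq_sum_range (fun i => ((i : ZMod (p ^ s))) ^ m) (p * p ^ s),
        ← Fin.sum_univ_eq_sum_range (fun i => ((i : ZMod (p ^ s))) ^ m) (p ^ s),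
        ← Equiv.sum_comp finProdFinEquiv
          (fun i : Fin (p * p ^ s) => (((i : ℕ) : ZMod (p ^ s))) ^ m),
        Fintype.sum_prod_type]
      have key : ∀ (x : Fin p) (y : Fin (p ^ s)),
          ((((finProdFinEquiv (x, y)) : ℕ) : ZMod (p ^ s))) ^ m
            = (((y : ℕ) : ZMod (p ^ s))) ^ m := by
        intro x y
        congr 1
        simp only [finProdFinEquiv_apply_val]
        simp [Nat.cast_add, Nat.cast_mul, ZMod.natCast_self]
      simp only [key]
      rw [Finset.sum_const, Finset.card_univ, Fintype.card_fin, nsmul_eq_mul]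
    have hdvd : (p ^ s : ℕ) ∣ (p * ∑ i ∈ Finset.range (p ^ s), i ^ m) := by
      have h2 := mul_dvd_mul_left p ih
      rwa [← hps] at h2
    have h0 : ((∑ i ∈ Finset.range (p ^ (s + 1)), i ^ m : ℕ) : ZMod (p ^ s)) = 0 := by
      rw [hcong, ZMod.natCast_eq_zero_iff]; exact hdvd
    rw [ZMod.natCast_eq_zero_iff] at h0
    simpa using h0

/-- The full power sum over `ZMod (p^s)` is a multiple of `p^(s-1)`. -/
lemma lemA (p s : ℕ) [NeZero (p ^ s)] (m : ℕ) :
    ∃ t : ZMod (p ^ s), ∑ x : ZMod (p ^ s), x ^ m = (p : ZMod (p ^ s)) ^ (s - 1) * t := by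
  have hsum : ∑ x : ZMod (p ^ s), x ^ m
      = ((∑ i ∈ Finset.range (p ^ s), i ^ m : ℕ) : ZMod (p ^ s)) := by
    push_cast
    rw [← Fin.sum_univ_eq_sum_range (fun i => ((i : ZMod (p ^ s))) ^ m) (p ^ s)]
    refine Fintype.sum_bijective (fun x : ZMod (p ^ s) => (⟨x.val, x.val_lt⟩ : Fin (p ^ s)))
      ?_ _ _ ?_
    · constructor
      · intro a b hab
        have : a.val = b.val := by simpa using hab
        exact ZMod.val_injective _ this
      · intro y
        refine ⟨(y : ZMod (p ^ s)), ?_⟩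
        ext
        simp [ZMod.val_cast_of_lt y.is_lt]
    · intro x
      simp [ZMod.natCast_val, ZMod.cast_id]
  obtain ⟨t, ht⟩ := natA p m s
  refine ⟨(t : ZMod (p ^ s)), ?_⟩
  rw [hsum, ht]
  push_cast
  ring

/-- Sum of a monomial over all assignments of variables in `ZMod (p^s)` vanishes
when there are at least two variables and `s ≥ 2`. -/
lemma sum_monomial_eq_zero (p s : ℕ) [NeZero (p ^ s)] (hs : 2 ≤ s)
    {ι : Type*} [Fintype ι] [DecidableEq ι] (hcard : 2 ≤ Fintype.card ι)
    {k : ℕ} (v : Fin k → ι) :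
    ∑ c : ι → ZMod (p ^ s), ∏ j, c (v j) = 0 := by
  have hmono : ∀ c : ι → ZMod (p ^ s),
      ∏ j, c (v j) = ∏ e : ι, c e ^ (Finset.univ.filter fun j => v j = e).card := by
    intro c
    calc ∏ j, c (v j)
        = ∏ e : ι, ∏ j ∈ Finset.univ.filter (fun j => v j = e), c (v j) :=
          (Finset.prod_fiberwise_of_maps_to (fun j _ => Finset.mem_univ (v j)) _).symm
      _ = ∏ e : ι, c e ^ (Finset.univ.filter fun j => v j = e).card := by
          refine Finset.prod_congr rfl fun e _ => ?_
          have h : ∀ j ∈ Finset.univ.filter (fun j => v j = e), c (v j) = c e :=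
            fun j hj => by rw [(Finset.mem_filter.mp hj).2]
          rw [Finset.prod_congr rfl h, Finset.prod_const]
  rw [Finset.sum_congr rfl fun c _ => hmono c, ← Fintype.prod_sum (fun (e : ι) (x : ZMod (p ^ s)) => x ^ (Finset.univ.filter fun j => v j = e).card)]
  choose t ht using fun e : ι => lemA p s ((Finset.univ.filter fun j => v j = e).card)
  rw [Finset.prod_congr rfl fun e (_ : e ∈ Finset.univ) => ht e,
    Finset.prod_mul_distrib, Finset.prod_const, Finset.card_univ]
  have hz : ((p : ZMod (p ^ s)) ^ (s - 1)) ^ Fintype.card ι = 0 := by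
    rw [← pow_mul]
    have hcast : ((p : ZMod (p ^ s)) ^ ((s - 1) * Fintype.card ι))
        = ((p ^ ((s - 1) * Fintype.card ι) : ℕ) : ZMod (p ^ s)) := by push_cast; ring
    rw [hcast, ZMod.natCast_eq_zero_iff]
    refine pow_dvd_pow p ?_
    calc s ≤ (s - 1) * 2 := by omega
      _ ≤ (s - 1) * Fintype.card ι := Nat.mul_le_mul_left _ hcard
  rw [hz, zero_mul]

/-- Entrywise path expansion of a product of a list of matrices. -/
lemma listProd_entry {R : Type*} [CommRing R] {d : ℕ} :
    ∀ (k : ℕ) (M : Fin k → Matrix (Fin d) (Fin d) R) (a b : Fin d),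
      (List.ofFn M).prod a b =
        ∑ g : Fin k → Fin d,
          (∏ j : Fin k, M j ((Fin.cons a g : Fin (k + 1) → Fin d) j.castSucc) (g j)) *
            (if (Fin.cons a g : Fin (k + 1) → Fin d) (Fin.last k) = b then 1 else 0) := by
  intro k
  induction k with
  | zero =>
    intro M a b
    simp [Matrix.one_apply, Fin.last]
  | succ k ih =>
    intro M a b
    rw [List.ofFn_succ, List.prod_cons, Matrix.mul_apply,
      ← Equiv.sum_comp (Fin.consEquiv (fun _ : Fin (k + 1) => Fin d))
        (fun g => (∏ j : Fin (k + 1), M j ((Fin.cons a g : Fin (k + 2) → Fin d) j.castSucc) (g j)) *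
          (if (Fin.cons a g : Fin (k + 2) → Fin d) (Fin.last (k + 1)) = b then 1 else 0)),
      Fintype.sum_prod_type]
    refine Finset.sum_congr rfl fun c _ => ?_
    rw [ih (fun j => M j.succ) c b, Finset.mul_sum]
    refine Finset.sum_congr rfl fun g' _ => ?_
    simp only [Fin.consEquiv, Equiv.coe_fn_mk]
    rw [Fin.prod_univ_succ]
    simp only [Fin.castSucc_zero, Fin.cons_zero, Fin.cons_succ, ← Fin.succ_castSucc,
      ← Fin.succ_last, mul_assoc]

theorem stmt_16 (p s d r k : ℕ) (hp : p.Prime) [NeZero (p ^ s)] (hodd : Odd p) (hs : 2 ≤ s)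
    (hd : 2 ≤ d) (hr : 2 ≤ r) (hk : 0 < k) (w : Fin k → Fin r) :
    ∑ A : Fin r → Matrix (Fin d) (Fin d) (ZMod (p ^ s)),
      (List.ofFn fun j => A (w j)).prod = 0 := by
  ext a b
  rw [Matrix.sum_apply]
  rw [Finset.sum_congr rfl fun A (_ : A ∈ Finset.univ) =>
    listProd_entry k (fun j => A (w j)) a b]
  rw [Finset.sum_comm]
  refine Finset.sum_eq_zero fun g _ => ?_
  rw [← Finset.sum_mul]
  have hzero : ∑ A : Fin r → Matrix (Fin d) (Fin d) (ZMod (p ^ s)),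
      ∏ j : Fin k, A (w j) ((Fin.cons a g : Fin (k + 1) → Fin d) j.castSucc) (g j) = 0 := by
    let E : ((Fin r × Fin d × Fin d) → ZMod (p ^ s)) ≃
        (Fin r → Matrix (Fin d) (Fin d) (ZMod (p ^ s))) :=
      { toFun := fun c i => Matrix.of fun x y => c (i, x, y)
        invFun := fun A e => A e.1 e.2.1 e.2.2
        left_inv := fun c => rfl
        right_inv := fun A => rfl }
    rw [← Equiv.sum_comp E (fun A => ∏ j : Fin k,
      A (w j) ((Fin.cons a g : Fin (k + 1) → Fin d) j.castSucc) (g j))]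
    have hcard : 2 ≤ Fintype.card (Fin r × Fin d × Fin d) := by
      simp only [Fintype.card_prod, Fintype.card_fin]
      nlinarith
    exact sum_monomial_eq_zero p s hs hcard
      (fun j => (w j, (Fin.cons a g : Fin (k + 1) → Fin d) j.castSucc, g j))
  rw [hzero, zero_mul]
end

section
/- Let p be a prime, d ≥ 2, r ≥ 1, and let w be a monomial of total degree k in r non-commuting variables. If k < r·d²·(p−1), or if (p−1) does not divide k, then Σ over all r-tuples (A₁,...,A_r) of matrices in M_d(Z/pZ) of w(A₁,...,A_r) is the zero matrix. -/
open Finset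

/-- Sum of `x ^ m` over `ZMod p` vanishes unless `m ≠ 0` and `(p-1) ∣ m`. -/
lemma zmod_sum_pow_eq_zero {p : ℕ} [NeZero p] (hp : p.Prime) {m : ℕ}
    (h : m = 0 ∨ ¬ (p - 1) ∣ m) : ∑ x : ZMod p, x ^ m = 0 := by
  haveI : Fact p.Prime := ⟨hp⟩
  rcases h with rfl | hdvd
  · simp only [pow_zero, sum_const, nsmul_one, card_univ, ZMod.card,
      ZMod.natCast_self]
  · rcases Nat.eq_zero_or_pos m with rfl | hm
    · exact absurd (dvd_zero _) hdvd
    have hq : Fintype.card (ZMod p) = p := ZMod.card p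
    classical
    let φ : (ZMod p)ˣ ↪ ZMod p := ⟨fun x ↦ x, fun _ _ h => Units.ext h⟩
    have himg : univ.map φ = univ \ {0} := by
      ext x
      simp only [mem_map, mem_univ, Function.Embedding.coeFn_mk, true_and, mem_sdiff,
        mem_singleton, φ]
      exact (isUnit_iff_ne_zero (a := x))
    calc
      ∑ x : ZMod p, x ^ m = ∑ x ∈ univ \ {(0 : ZMod p)}, x ^ m := by
        rw [← sum_sdiff ({0} : Finset (ZMod p)).subset_univ, sum_singleton,
          zero_pow hm.ne', add_zero]
      _ = ∑ x : (ZMod p)ˣ, ((x : ZMod p) ^ m) := by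
        simp [φ, ← himg, univ.sum_map φ]
        rfl
      _ = 0 := by
        rw [FiniteField.sum_pow_units (ZMod p) m, if_neg]
        rwa [hq]

/-- Entry of a product of a list of matrices as a sum over paths. -/
lemma list_prod_entry {R : Type*} [CommRing R] {d : ℕ} :
    ∀ (k : ℕ) (M : Fin k → Matrix (Fin d) (Fin d) R) (a b : Fin d),
      (List.ofFn M).prod a b =
        ∑ π : Fin k → Fin d,
          (if (Fin.cons a π : Fin (k + 1) → Fin d) (Fin.last k) = b then (1 : R) else 0) *
            ∏ j : Fin k, M j ((Fin.cons a π : Fin (k + 1) → Fin d) j.castSucc) (π j) := by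
  intro k
  induction k with
  | zero =>
    intro M a b
    simp only [List.ofFn_zero, List.prod_nil, Matrix.one_apply]
    rw [Fintype.sum_eq_single (fun i : Fin 0 => i.elim0)
      (fun f hf => absurd (funext fun i : Fin 0 => i.elim0) hf)]
    simp [Fin.cons, Fin.last]
    exact if_congr Iff.rfl rfl rfl
  | succ k ih =>
    intro M a b
    rw [List.ofFn_succ, List.prod_cons, Matrix.mul_apply]
    rw [← (Fin.consEquiv (fun _ : Fin (k + 1) => Fin d)).sum_comp]
    rw [Fintype.sum_prod_type]
    refine Finset.sum_congr rfl fun c _ => ?_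
    rw [ih (fun j => M j.succ) c b, Finset.mul_sum]
    refine Finset.sum_congr rfl fun π _ => ?_
    have hcons : (Fin.consEquiv (fun _ : Fin (k + 1) => Fin d)) (c, π) = Fin.cons c π := rfl
    rw [hcons, ← Fin.succ_last, Fin.cons_succ, Fin.prod_univ_succ]
    simp only [← Fin.succ_castSucc, Fin.cons_succ, Fin.cons_zero, Fin.castSucc_zero]
    ring

theorem stmt_17 (p d r k : ℕ) (hp : p.Prime) [NeZero p] (hd : 2 ≤ d) (hr : 1 ≤ r)
    (w : Fin k → Fin r) (h : k < r * d ^ 2 * (p - 1) ∨ ¬(p - 1) ∣ k) :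
    ∑ A : Fin r → Matrix (Fin d) (Fin d) (ZMod p),
      (List.ofFn fun j => A (w j)).prod = 0 := by
  classical
  ext a b
  rw [Matrix.sum_apply, Matrix.zero_apply]
  simp only [list_prod_entry k _ a b]
  rw [Finset.sum_comm]
  refine Finset.sum_eq_zero fun π _ => ?_
  rw [← Finset.mul_sum]
  -- variable index type
  set V := Fin r × Fin d × Fin d with hV
  -- the variable used in position j
  set v : Fin k → V := fun j => (w j, (Fin.cons a π : Fin (k + 1) → Fin d) j.castSucc, π j) with hv
  -- transport the sum over A to a sum over f : V → ZMod p
  let e : (V → ZMod p) ≃ (Fin r → Matrix (Fin d) (Fin d) (ZMod p)) :=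
    { toFun := fun f i => Matrix.of fun x y => f (i, x, y)
      invFun := fun A z => A z.1 z.2.1 z.2.2
      left_inv := fun f => by funext z; rfl
      right_inv := fun A => by funext i x y; rfl }
  have hsum : ∑ A : Fin r → Matrix (Fin d) (Fin d) (ZMod p),
      ∏ j : Fin k, A (w j) ((Fin.cons a π : Fin (k + 1) → Fin d) j.castSucc) (π j)
      = ∑ f : V → ZMod p, ∏ j : Fin k, f (v j) := by
    rw [← e.sum_comp]
    exact Finset.sum_congr rfl fun f _ => Finset.prod_congr rfl fun j _ => by simp only [hv]; rfl
  rw [hsum]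
  -- multiplicity of each variable
  set m : V → ℕ := fun u => (univ.filter fun j => v j = u).card with hm
  have hfact : ∑ f : V → ZMod p, ∏ j : Fin k, f (v j)
      = ∏ u : V, ∑ x : ZMod p, x ^ m u := by
    have step1 : ∀ f : V → ZMod p, ∏ j : Fin k, f (v j) = ∏ u : V, f u ^ m u := by
      intro f
      rw [← Finset.prod_fiberwise univ v (fun j => f (v j))]
      refine Finset.prod_congr rfl fun u _ => ?_
      calc ∏ j ∈ univ.filter fun j => v j = u, f (v j)
          = ∏ _j ∈ univ.filter fun j => v j = u, f u :=
            Finset.prod_congr rfl fun j hj => by rw [(Finset.mem_filter.mp hj).2]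
        _ = f u ^ m u := Finset.prod_const _
    simp only [step1]
    rw [Finset.prod_univ_sum (fun _ : V => (univ : Finset (ZMod p)))
      (fun u x => x ^ m u)]
    rw [Fintype.piFinset_univ]
  rw [hfact]
  -- now show the product vanishes
  have hexists : ∃ u : V, m u = 0 ∨ ¬ (p - 1) ∣ m u := by
    by_contra hcon
    push_neg at hcon
    have hge : ∀ u : V, p - 1 ≤ m u := fun u =>
      Nat.le_of_dvd (Nat.pos_of_ne_zero (hcon u).1) (hcon u).2
    have hsumk : ∑ u : V, m u = k := by
      rw [hm]
      rw [← Finset.card_eq_sum_card_fiberwise (fun j _ => mem_univ (v j))]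
      simp
    have hcard : Fintype.card V = r * d ^ 2 := by
      simp [hV, Fintype.card_prod, sq]
    have hk1 : r * d ^ 2 * (p - 1) ≤ k := by
      calc r * d ^ 2 * (p - 1) = Fintype.card V * (p - 1) := by rw [hcard]
        _ = ∑ _u : V, (p - 1) := by rw [Finset.sum_const, card_univ, smul_eq_mul]
        _ ≤ ∑ u : V, m u := Finset.sum_le_sum fun u _ => hge u
        _ = k := hsumk
    have hk2 : (p - 1) ∣ k := by
      rw [← hsumk]; exact Finset.dvd_sum fun u _ => (hcon u).2
    rcases h with h | h
    · exact absurd hk1 (not_le.mpr h)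
    · exact h hk2
  obtain ⟨u, hu⟩ := hexists
  rw [Finset.prod_eq_zero (mem_univ u) (zmod_sum_pow_eq_zero hp hu), mul_zero]
end
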